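/- arXiv:1206.1714 — 5 statements merged into one kernel-verified Lean document; each statement's English description precedes it below -/
import Mathlib

section
/- A finitely generated semigroup S has SWP(S,A) regular for every finite generating set A if and only if S is finite. -/
/-- An asynchronous two-tape finite state automaton: in each step it reads at
most one symbol from each tape. -/
structure AsyncFSA (A : Type*) (B : Type*) where
  Q : Type
  [fin : Finite Q]
  init : Q
  accept : Set Q
  trans : Q → Option A → Option B → Q → Prop

namespace AsyncFSA

variable {A B : Type*}

/-- Computations of an asynchronous automaton. -/
inductive Reaches (M : AsyncFSA A B) : M.Q → List A → List B → M.Q → Prop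
  | refl (q : M.Q) : Reaches M q [] [] q
  | step {p q r : M.Q} {a : Option A} {b : Option B} {u : List A} {v : List B} :
      M.trans p a b q → Reaches M q u v r →
      Reaches M p (a.toList ++ u) (b.toList ++ v) r

/-- Acceptance of a pair of strings. -/
def Accepts (M : AsyncFSA A B) (u : List A) (v : List B) : Prop :=
  ∃ q ∈ M.accept, M.Reaches M.init u v q

end AsyncFSA

/-- A relation on strings is rational if it is decided by an asynchronous
two-tape finite state automaton. -/
def IsRationalRel {A B : Type*} (R : Set (List A × List B)) : Prop :=
  ∃ M : AsyncFSA A B, ∀ p : List A × List B, p ∈ R ↔ M.Accepts p.1 p.2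

/-- Pad a pair of strings to equal length, using `none` as padding symbol. -/
def padPair {A : Type*} (p : List A × List A) : List (Option A × Option A) :=
  List.zip (p.1.map some ++ List.replicate (p.2.length - p.1.length) none)
           (p.2.map some ++ List.replicate (p.1.length - p.2.length) none)

/-- A relation on strings is regular if a synchronous two-tape finite state
automaton (a finite automaton over the padded pair alphabet) accepts a padded
pair exactly when the pair is in the relation. -/
def IsRegularRel {A : Type*} (R : Set (List A × List A)) : Prop :=
  ∃ (Q : Type) (_ : Fintype Q) (M : DFA (Option A × Option A) Q),
    ∀ p : List A × List A, p ∈ R ↔ padPair p ∈ M.accepts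

/-- A language is regular if accepted by a finite state automaton. -/
def IsRegularLang {A : Type*} (L : Set (List A)) : Prop :=
  ∃ (Q : Type) (_ : Fintype Q) (M : DFA A Q), ∀ w, w ∈ L ↔ w ∈ M.accepts

/-- Evaluation of a word in a semigroup (`none` for the empty word). -/
def evalWord {α : Type*} {S : Type*} [Semigroup S] (f : α → S) : List α → Option S
  | [] => none
  | a :: l => some (List.foldl (fun s x => s * f x) (f a) l)

/-- The semigroup word problem with respect to a set `A` of elements:
pairs of nonempty strings over `A` representing the same element. -/
def SWP {S : Type*} [Semigroup S] (A : Set S) : Set (List ↥A × List ↥A) :=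
  {p | p.1 ≠ [] ∧ p.2 ≠ [] ∧
    evalWord Subtype.val p.1 = evalWord Subtype.val p.2}

/-- The monoid word problem with respect to a set `A` of elements. -/
def MWP {M : Type*} [Monoid M] (A : Set M) : Set (List ↥A × List ↥A) :=
  {p | (p.1.map Subtype.val).prod = (p.2.map Subtype.val).prod}

/-- A semigroup has rational word problem if it has a finite generating set
with rational word problem. -/
def HasRationalWP (S : Type*) [Semigroup S] : Prop :=
  ∃ A : Set S, A.Finite ∧ Subsemigroup.closure A = ⊤ ∧ IsRationalRel (SWP A)


namespace SwpAux

variable {S : Type*} [Semigroup S] {α : Type*}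

/-- multiplication on `Option S` with `none` as (adjoined) identity. -/
def op : Option S → Option S → Option S
  | none, y => y
  | some a, none => some a
  | some a, some b => some (a * b)

@[simp] lemma op_none_left (y : Option S) : op none y = y := rfl
@[simp] lemma op_none_right (x : Option S) : op x none = x := by cases x <;> rfl
@[simp] lemma op_some_some (a b : S) : op (some a) (some b) = some (a * b) := rfl

lemma op_assoc (x y z : Option S) : op (op x y) z = op x (op y z) := by
  cases x <;> cases y <;> cases z <;> simp [op, mul_assoc]

lemma mul_foldl (f : α → S) (s x : S) (t : List α) :
    s * List.foldl (fun y b => y * f b) x t = List.foldl (fun y b => y * f b) (s * x) t := by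
  induction t generalizing x with
  | nil => rfl
  | cons b t ih => simp only [List.foldl_cons, ih, mul_assoc]

lemma evalWord_cons (f : α → S) (a : α) (l : List α) :
    evalWord f (a :: l) = op (some (f a)) (evalWord f l) := by
  cases l with
  | nil => rfl
  | cons b t =>
    simp only [evalWord, op_some_some, List.foldl_cons]
    rw [← mul_foldl]

lemma evalWord_append (f : α → S) (u v : List α) :
    evalWord f (u ++ v) = op (evalWord f u) (evalWord f v) := by
  induction u with
  | nil => simp [evalWord]
  | cons a t ih =>
    rw [List.cons_append, evalWord_cons, ih, evalWord_cons, op_assoc]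

@[simp] lemma evalWord_nil (f : α → S) : evalWord f [] = none := rfl

lemma evalWord_eq_none_iff (f : α → S) (w : List α) : evalWord f w = none ↔ w = [] := by
  cases w <;> simp [evalWord]

lemma exists_some_of_ne_nil (f : α → S) {w : List α} (h : w ≠ []) :
    ∃ s, evalWord f w = some s := by
  cases w with
  | nil => exact absurd rfl h
  | cons a t => exact ⟨_, rfl⟩

/-- `pw z n = z^(n+1)`. -/
def pw (z : S) : ℕ → S
  | 0 => z
  | n + 1 => z * pw z n

lemma evalWord_replicate (f : α → S) (a : α) (n : ℕ) :
    evalWord f (List.replicate (n + 1) a) = some (pw (f a) n) := by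
  induction n with
  | zero => rfl
  | succ n ih => rw [List.replicate_succ, evalWord_cons, ih]; rfl

lemma pw_succ (z : S) (n : ℕ) : pw z (n+1) = z * pw z n := rfl

lemma pw_double (z : S) (n : ℕ) : pw (z * z) n = pw z (2 * n + 1) := by
  induction n with
  | zero => rfl
  | succ n ih =>
    rw [pw_succ, ih]
    have : 2 * (n + 1) + 1 = ((2 * n + 1) + 1) + 1 := by ring
    conv_rhs => rw [this, pw_succ, pw_succ]
    rw [mul_assoc]

lemma exists_word {A : Set S} (hgen : Subsemigroup.closure A = ⊤) (s : S) :
    ∃ w : List ↥A, w ≠ [] ∧ evalWord Subtype.val w = some s := by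
  have hs : s ∈ Subsemigroup.closure A := hgen ▸ Subsemigroup.mem_top s
  induction hs using Subsemigroup.closure_induction with
  | mem x hx => exact ⟨[⟨x, hx⟩], by simp, rfl⟩
  | mul x y hx hy ihx ihy =>
    obtain ⟨u, hu, hu'⟩ := ihx
    obtain ⟨v, hv, hv'⟩ := ihy
    exact ⟨u ++ v, by simp [hu], by rw [evalWord_append, hu', hv']; rfl⟩

end SwpAux

namespace SwpAux

variable {S : Type*} [Semigroup S] {α : Type*}

/-- update an `Option S` accumulator by an optional letter. -/
def upd (f : α → S) (x : Option S) (oa : Option α) : Option S :=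
  op x (oa.map f)

@[simp] lemma upd_none (f : α → S) (x : Option S) : upd f x none = x := by
  simp [upd]

lemma foldl_upd_replicate_none (f : α → S) (x : Option S) (k : ℕ) :
    List.foldl (upd f) x (List.replicate k none) = x := by
  induction k with
  | zero => rfl
  | succ k ih => rw [List.replicate_succ, List.foldl_cons, upd_none, ih]

lemma foldl_upd_map_some (f : α → S) (u : List α) (x : Option S) :
    List.foldl (upd f) x (u.map some) = op x (evalWord f u) := by
  induction u generalizing x with
  | nil => simp
  | cons a t ih =>
    rw [List.map_cons, List.foldl_cons, ih, evalWord_cons, ← op_assoc]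
    rfl

lemma foldl_upd_padded (f : α → S) (u : List α) (k : ℕ) :
    List.foldl (upd f) none (u.map some ++ List.replicate k none) = evalWord f u := by
  rw [List.foldl_append, foldl_upd_map_some, foldl_upd_replicate_none, op_none_left]

/-- the synchronous two-tape automaton computing evaluations of both tapes. -/
def pairDFA (f : α → S) : DFA (Option α × Option α) (Option S × Option S) where
  step := fun p c => (upd f p.1 c.1, upd f p.2 c.2)
  start := (none, none)
  accept := {p | ∃ s : S, p = (some s, some s)}

lemma pairDFA_evalFrom (f : α → S) :
    ∀ (L₁ L₂ : List (Option α)) (x y : Option S), L₁.length = L₂.length →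
      (pairDFA f).evalFrom (x, y) (L₁.zip L₂) =
        (List.foldl (upd f) x L₁, List.foldl (upd f) y L₂) := by
  intro L₁
  induction L₁ with
  | nil =>
    intro L₂ x y h
    cases L₂ with
    | nil => rfl
    | cons b t => simp at h
  | cons a t ih =>
    intro L₂ x y h
    cases L₂ with
    | nil => simp at h
    | cons b t₂ =>
      simp only [List.length_cons, Nat.succ.injEq] at h
      simp only [List.zip_cons_cons, List.foldl_cons]
      rw [show (pairDFA f).evalFrom (x, y) ((a, b) :: t.zip t₂) =
        (pairDFA f).evalFrom ((pairDFA f).step (x,y) (a,b)) (t.zip t₂) from rfl]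
      exact ih t₂ _ _ h

lemma length_pad_eq (m n : ℕ) : m + (n - m) = n + (m - n) := by omega

lemma pairDFA_spec {A : Set S} (p : List ↥A × List ↥A) :
    p ∈ SWP A ↔ padPair p ∈ (pairDFA (Subtype.val : ↥A → S)).accepts := by
  rcases p with ⟨u, v⟩
  rw [DFA.mem_accepts]
  have hlen : (u.map some ++ List.replicate (v.length - u.length) none).length
      = (v.map some ++ List.replicate (u.length - v.length) none).length := by
    simp [length_pad_eq]
  have : (pairDFA (Subtype.val : ↥A → S)).eval (padPair (u, v)) =
      (evalWord Subtype.val u, evalWord Subtype.val v) := by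
    rw [show (pairDFA (Subtype.val : ↥A → S)).eval (padPair (u,v)) =
      (pairDFA (Subtype.val : ↥A → S)).evalFrom (none, none) (padPair (u,v)) from rfl]
    rw [padPair, pairDFA_evalFrom _ _ _ _ _ hlen, foldl_upd_padded, foldl_upd_padded]
  rw [this]
  constructor
  · rintro ⟨h1, h2, h3⟩
    obtain ⟨s, hs⟩ := exists_some_of_ne_nil Subtype.val h1
    refine ⟨s, ?_⟩
    show (evalWord Subtype.val u, evalWord Subtype.val v) = (some s, some s)
    rw [hs, ← h3, hs]
  · rintro ⟨s, hs⟩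
    have hs' : evalWord Subtype.val u = some s ∧ evalWord Subtype.val v = some s := by
      have := Prod.ext_iff.mp hs
      exact this
    obtain ⟨h1, h2⟩ := hs'
    refine ⟨?_, ?_, by rw [h1, h2]⟩
    · intro h; simp only at h; rw [h] at h1; simp at h1
    · intro h; simp only at h; rw [h] at h2; simp at h2
end SwpAux

namespace SwpAux

variable {α σ τ : Type*}

/-- transport a DFA along an equivalence of state spaces. -/
def reindex (M : DFA α σ) (e : σ ≃ τ) : DFA α τ where
  step := fun q c => e (M.step (e.symm q) c)
  start := e M.start
  accept := e.symm ⁻¹' M.accept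

lemma reindex_evalFrom (M : DFA α σ) (e : σ ≃ τ) (w : List α) :
    ∀ s : σ, (reindex M e).evalFrom (e s) w = e (M.evalFrom s w) := by
  induction w with
  | nil => intro s; rfl
  | cons c t ih =>
    intro s
    show (reindex M e).evalFrom ((reindex M e).step (e s) c) t = _
    have : (reindex M e).step (e s) c = e (M.step s c) := by
      simp [reindex]
    rw [this, ih]
    rfl

lemma reindex_accepts (M : DFA α σ) (e : σ ≃ τ) (w : List α) :
    w ∈ (reindex M e).accepts ↔ w ∈ M.accepts := by
  rw [DFA.mem_accepts, DFA.mem_accepts]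
  show (reindex M e).evalFrom (e M.start) w ∈ _ ↔ _
  rw [reindex_evalFrom]
  simp only [reindex, Set.mem_preimage, Equiv.symm_apply_apply]
  rfl

end SwpAux

/-- Backward direction. -/
theorem finite_isRegularRel {S : Type*} [Semigroup S] [Finite S] (A : Set S) :
    ∃ (Q : Type) (_ : Fintype Q) (M : DFA (Option ↥A × Option ↥A) Q),
      ∀ p : List ↥A × List ↥A, p ∈ SWP A ↔ padPair p ∈ M.accepts := by
  classical
  have : Fintype S := Fintype.ofFinite S
  have : Finite (Option S × Option S) := Finite.of_fintype _
  obtain ⟨n, ⟨e⟩⟩ := Finite.exists_equiv_fin (Option S × Option S)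
  refine ⟨Fin n, inferInstance, SwpAux.reindex (SwpAux.pairDFA (Subtype.val : ↥A → S)) e, ?_⟩
  intro p
  rw [SwpAux.reindex_accepts]
  exact SwpAux.pairDFA_spec p

namespace SwpAux

variable {α : Type*} {Q : Type*}

/-- `padw u v` : padded pair word for `v.length ≤ u.length`. -/
def padw (u v : List α) : List (Option α × Option α) :=
  (u.map some).zip (v.map some ++ List.replicate (u.length - v.length) none)

lemma padw_append_some {u v : List α} (h : v.length = u.length) (a b : α) :
    padw (u ++ [a]) (v ++ [b]) = padw u v ++ [(some a, some b)] := by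
  unfold padw
  simp only [List.map_append, List.length_append, List.map_cons, List.map_nil,
    List.length_cons, List.length_nil]
  have h0 : (v.length + 1) - (u.length + 1) = 0 := by omega
  have h0' : u.length - v.length = 0 := by omega
  have h1 : (u.length + [a].length) - (v.length + [b].length) = 0 := by simp; omega
  rw [show u.length + 1 - (v.length + 1) = 0 by omega, show u.length - v.length = 0 by omega]
  simp only [List.replicate_zero, List.append_nil]
  rw [List.zip_append (by simp [h])]
  rfl

lemma padw_append_none {u v : List α} (h : v.length ≤ u.length) (a : α) :
    padw (u ++ [a]) v = padw u v ++ [(some a, none)] := by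
  unfold padw
  simp only [List.map_append, List.length_append, List.map_cons, List.map_nil,
    List.length_cons, List.length_nil]
  rw [show u.length + 1 - v.length = (u.length - v.length) + 1 by omega,
    List.replicate_succ', ← List.append_assoc]
  rw [List.zip_append (by simp; omega)]
  rfl

variable (M : DFA (Option α × Option α) Q)

/-- subset-construction automaton tracking states reachable on pairs `(u, v)`
with `v` of equal length (first component) or shorter nonempty `v` (second). -/
def minDFA : DFA α (Option (Set Q × Set Q)) where
  step := fun s a => match s with
    | none => some ({q' | ∃ b : α, q' = M.step M.start (some a, some b)}, ∅)
    | some (R, E) => some ({q' | ∃ q ∈ R, ∃ b : α, q' = M.step q (some a, some b)},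
                           {q' | ∃ q ∈ R ∪ E, q' = M.step q (some a, none)})
  start := none
  accept := ∅

def Rset (u : List α) : Set Q :=
  {q' | ∃ v : List α, v.length = u.length ∧ q' = M.evalFrom M.start (padw u v)}

def Eset (u : List α) : Set Q :=
  {q' | ∃ v : List α, v ≠ [] ∧ v.length < u.length ∧ q' = M.evalFrom M.start (padw u v)}

lemma minDFA_eval (u : List α) (hu : u ≠ []) :
    (minDFA M).eval u = some (Rset M u, Eset M u) := by
  induction u using List.reverseRecOn with
  | nil => exact absurd rfl hu
  | append_singleton u a ih =>
    rcases eq_or_ne u [] with rfl | hne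
    · -- base case : u = [a]
      show (minDFA M).step none a = _
      unfold minDFA
      simp only
      congr 1
      refine Prod.ext ?_ ?_
      · ext q'
        constructor
        · rintro ⟨b, rfl⟩
          exact ⟨[b], by simp, by simp [padw, DFA.evalFrom]⟩
        · rintro ⟨v, hv, rfl⟩
          simp only [List.length_nil, List.length_append, List.length_cons] at hv
          obtain ⟨b, rfl⟩ : ∃ b, v = [b] := by
            cases v with
            | nil => simp at hv
            | cons b t => cases t with
              | nil => exact ⟨b, rfl⟩
              | cons c t' => simp only [List.nil_append, List.length_cons,
                  List.length_nil] at hv; omega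
          exact ⟨b, by simp [padw, DFA.evalFrom]⟩
      · ext q'
        constructor
        · rintro ⟨⟩
        · rintro ⟨v, hv1, hv2, rfl⟩
          simp only [List.nil_append, List.length_cons, List.length_nil] at hv2
          exact absurd (List.length_eq_zero_iff.mp (by omega)) hv1
    · -- inductive step
      rw [show (minDFA M).eval (u ++ [a]) = (minDFA M).step ((minDFA M).eval u) a from
        DFA.evalFrom_append_singleton _ _ _ _, ih hne]
      show some _ = _
      congr 1
      have hulen : 1 ≤ u.length := List.length_pos_iff.mpr hne
      refine Prod.ext ?_ ?_
      · -- R component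
        ext q'
        constructor
        · rintro ⟨q, ⟨v, hvlen, rfl⟩, b, rfl⟩
          refine ⟨v ++ [b], by simp [hvlen], ?_⟩
          rw [padw_append_some hvlen, DFA.evalFrom_append_singleton]
        · rintro ⟨v, hvlen, rfl⟩
          simp only [List.length_append, List.length_cons, List.length_nil] at hvlen
          have hvne : v ≠ [] := by
            intro h; rw [h] at hvlen; simp only [List.length_nil] at hvlen; omega
          obtain ⟨v', b, rfl⟩ : ∃ v' b, v = v' ++ [b] := by
            rcases List.eq_nil_or_concat v with h | ⟨v', b, h⟩
            · exact absurd h hvne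
            · exact ⟨v', b, by simpa using h⟩
          have hv'len : v'.length = u.length := by
            simp only [List.length_append, List.length_cons, List.length_nil] at hvlen; omega
          rw [padw_append_some hv'len, DFA.evalFrom_append_singleton]
          exact ⟨_, ⟨v', hv'len, rfl⟩, b, rfl⟩
      · -- E component
        ext q'
        constructor
        · rintro ⟨q, hq, rfl⟩
          rcases hq with ⟨v, hvlen, rfl⟩ | ⟨v, hvne, hvlen, rfl⟩
          · refine ⟨v, ?_, by
              simp only [List.length_append, List.length_cons, List.length_nil]; omega, ?_⟩
            · intro h; rw [h] at hvlen; simp at hvlen; omega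
            · rw [padw_append_none (le_of_eq hvlen), DFA.evalFrom_append_singleton]
          · refine ⟨v, hvne, by
              simp only [List.length_append, List.length_cons, List.length_nil]; omega, ?_⟩
            rw [padw_append_none (le_of_lt hvlen), DFA.evalFrom_append_singleton]
        · rintro ⟨v, hvne, hvlen, rfl⟩
          simp only [List.length_append, List.length_cons, List.length_nil] at hvlen
          have : v.length ≤ u.length := by omega
          rw [padw_append_none this, DFA.evalFrom_append_singleton]
          rcases eq_or_lt_of_le this with heq | hlt
          · exact ⟨_, Or.inl ⟨v, heq, rfl⟩, rfl⟩
          · exact ⟨_, Or.inr ⟨v, hvne, hlt, rfl⟩, rfl⟩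

end SwpAux

namespace SwpAux

variable {α σ : Type*}

lemma flatten_replicate_succ (k : ℕ) (y : List α) :
    (List.replicate (k+1) y).flatten = y ++ (List.replicate k y).flatten := by
  rw [List.replicate_succ, List.flatten_cons]

lemma length_flatten_replicate (k : ℕ) (y : List α) :
    (List.replicate k y).flatten.length = k * y.length := by
  induction k with
  | zero => simp
  | succ k ih =>
    rw [flatten_replicate_succ, List.length_append, ih]
    ring

lemma eval_pump (D : DFA α σ) {x y : List α}
    (h : D.eval (x ++ y) = D.eval x) :
    ∀ k, D.eval (x ++ (List.replicate k y).flatten) = D.eval x := by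
  intro k
  induction k with
  | zero => simp
  | succ k ih =>
    rw [flatten_replicate_succ, show x ++ (y ++ (List.replicate k y).flatten)
        = (x ++ y) ++ (List.replicate k y).flatten from by simp,
      show D.eval ((x ++ y) ++ (List.replicate k y).flatten)
        = D.evalFrom (D.eval (x ++ y)) ((List.replicate k y).flatten) from
        DFA.evalFrom_of_append _ _ _ _,
      h]
    have h2 : D.eval (x ++ (List.replicate k y).flatten)
        = D.evalFrom (D.eval x) ((List.replicate k y).flatten) :=
      DFA.evalFrom_of_append _ _ _ _
    rw [← h2, ih]

end SwpAux

namespace SwpAux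

variable {S : Type*} [Semigroup S] {α : Type*}

lemma evalWord_flatten_replicate (f : α → S) {y : List α} {z : S}
    (hy : evalWord f y = some z) (k : ℕ) :
    evalWord f ((List.replicate (k+1) y).flatten) = some (pw z k) := by
  induction k with
  | zero => rw [flatten_replicate_succ]; simp [evalWord_append, hy]; rfl
  | succ k ih =>
    rw [flatten_replicate_succ, evalWord_append, hy, ih, op_some_some, ← pw_succ]

lemma padPair_eq_padw {A : Type*} {u v : List A} (h : v.length ≤ u.length) :
    padPair (u, v) = padw u v := by
  unfold padPair padw
  simp only [Nat.sub_eq_zero_of_le h, List.replicate_zero, List.append_nil]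

end SwpAux

open SwpAux in
/-- Forward direction: an infinite f.g. semigroup fails to have regular word
problem for some finite generating set. -/
theorem infinite_not_all_regular {S : Type*} [Semigroup S] [Infinite S]
    {A : Set S} (hA : A.Finite) (hgen : Subsemigroup.closure A = ⊤)
    (hreg : ∀ B : Set S, B.Finite → Subsemigroup.closure B = ⊤ →
      IsRegularRel (SWP B)) : False := by
  classical
  obtain ⟨Q₁, fQ₁, M₁, hM₁⟩ := hreg A hA hgen
  have hAfin : Finite ↥A := hA.to_subtype
  -- the subset-construction automaton
  set D := minDFA M₁ with hD
  have : Fintype (Set Q₁) := inferInstance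
  have instσ : Fintype (Option (Set Q₁ × Set Q₁)) := inferInstance
  set C := Fintype.card (Option (Set Q₁ × Set Q₁)) with hC
  set φ := evalWord (Subtype.val : ↥A → S) with hφ
  -- minimal-length representatives
  have hchoice : ∀ s : S, ∃ w : List ↥A, w ≠ [] ∧ φ w = some s ∧
      ∀ v : List ↥A, v ≠ [] → φ v = some s → w.length ≤ v.length := by
    intro s
    obtain ⟨w₀, hw₀, hw₀'⟩ := exists_word hgen s
    have hne : {n | ∃ w : List ↥A, w ≠ [] ∧ φ w = some s ∧ w.length = n}.Nonempty :=
      ⟨w₀.length, w₀, hw₀, hw₀', rfl⟩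
    obtain ⟨w, hw, hw', hwlen⟩ := Nat.sInf_mem hne
    refine ⟨w, hw, hw', fun v hv hv' => ?_⟩
    rw [hwlen]
    exact Nat.sInf_le ⟨v, hv, hv', rfl⟩
  choose f hf1 hf2 hf3 using hchoice
  -- a minimal representative that is long
  have hfinj : Function.Injective f := by
    intro s t hst
    have := hf2 s
    rw [hst, hf2 t] at this
    exact (Option.some_injective S this).symm
  have hlong : ∃ s : S, C + 1 ≤ (f s).length := by
    by_contra hcon
    push_neg at hcon
    have hsub : Set.range f ⊆ {l : List ↥A | l.length ≤ C} := by
      rintro _ ⟨s, rfl⟩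
      exact Nat.lt_succ_iff.mp (hcon s)
    exact Set.infinite_range_of_injective hfinj
      ((List.finite_length_le ↥A C).subset hsub)
  obtain ⟨s, hs⟩ := hlong
  set w := f s with hwdef
  -- no strictly shorter equivalent word
  have hPw : ∀ v : List ↥A, v ≠ [] → v.length < w.length → φ v ≠ φ w := by
    intro v hv hvlen heq
    rw [hf2 s] at heq
    have hvlen' : v.length < (f s).length := by rw [← hwdef]; exact hvlen
    exact absurd (hf3 s v hv heq) (not_le.mpr hvlen')
  -- characterization of shorter-equivalents via Eset
  have hchar : ∀ u : List ↥A, u ≠ [] →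
      ((∃ v : List ↥A, v ≠ [] ∧ v.length < u.length ∧ φ v = φ u) ↔
        (Eset M₁ u ∩ M₁.accept).Nonempty) := by
    intro u hu
    constructor
    · rintro ⟨v, hv, hvlen, hveq⟩
      have hswp : (u, v) ∈ SWP A := ⟨hu, hv, hveq.symm⟩
      have := (hM₁ (u, v)).mp hswp
      rw [DFA.mem_accepts] at this
      rw [padPair_eq_padw (le_of_lt hvlen)] at this
      exact ⟨_, ⟨v, hv, hvlen, rfl⟩, this⟩
    · rintro ⟨q, ⟨v, hv, hvlen, rfl⟩, hacc⟩
      have : padPair (u, v) ∈ M₁.accepts := by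
        rw [DFA.mem_accepts, padPair_eq_padw (le_of_lt hvlen)]
        exact hacc
      obtain ⟨-, -, heq⟩ := (hM₁ (u, v)).mpr this
      exact ⟨v, hv, hvlen, heq.symm⟩
  have hEw : (Eset M₁ w ∩ M₁.accept) = ∅ := by
    by_contra hcon
    obtain ⟨v, hv, hvlen, hveq⟩ := (hchar w (hf1 s)).mpr
      (Set.nonempty_iff_ne_empty.mpr hcon)
    exact hPw v hv hvlen hveq
  -- pigeonhole on prefixes of w
  have hpigeon : ∃ i j : Fin (C + 1), (i : ℕ) < j ∧
      D.eval (w.take i) = D.eval (w.take j) := by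
    obtain ⟨i, j, hij, heq⟩ := Fintype.exists_ne_map_eq_of_card_lt
      (fun i : Fin (C + 1) => D.eval (w.take i)) (by simp; exact le_of_eq ((Fintype.card_congr (Equiv.refl _)).trans hC.symm))
    rcases lt_or_gt_of_ne (fun h => hij (by exact_mod_cast Fin.ext h) : (i:ℕ) ≠ j) with h | h
    · exact ⟨i, j, h, heq⟩
    · exact ⟨j, i, h, heq.symm⟩
  obtain ⟨i, j, hij, hstate⟩ := hpigeon
  have hiw : (i : ℕ) ≤ w.length := by have := i.isLt; omega
  have hjw : (j : ℕ) ≤ w.length := by have := j.isLt; omega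
  set x := w.take i with hxdef
  set y := (w.take j).drop i with hydef
  set r := w.drop j with hrdef
  have hxy : x ++ y = w.take j := by
    have h1 : (w.take (j:ℕ)).take (i:ℕ) = w.take (i:ℕ) := by
      rw [List.take_take, inf_eq_left.mpr (le_of_lt hij)]
    calc x ++ y = (w.take (j:ℕ)).take (i:ℕ) ++ (w.take (j:ℕ)).drop (i:ℕ) := by rw [h1]
    _ = w.take (j:ℕ) := List.take_append_drop _ _
  have hylen : y.length = (j : ℕ) - i := by
    rw [hydef, List.length_drop, List.length_take]
    omega
  have hyne : y ≠ [] := by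
    intro h
    rw [h] at hylen
    simp only [List.length_nil] at hylen
    omega
  have hylenpos : 1 ≤ y.length := by omega
  have heval_xy : D.eval (x ++ y) = D.eval x := by rw [hxy]; exact hstate.symm
  have hwfull : (x ++ y) ++ r = w := by rw [hxy]; exact List.take_append_drop _ _
  have hpump : ∀ k : ℕ, D.eval (x ++ ((List.replicate k y).flatten ++ r)) = D.eval w := by
    intro k
    have h1 : x ++ ((List.replicate k y).flatten ++ r)
        = (x ++ (List.replicate k y).flatten) ++ r := by simp
    rw [h1, show D.eval ((x ++ (List.replicate k y).flatten) ++ r)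
        = D.evalFrom (D.eval (x ++ (List.replicate k y).flatten)) r from
        DFA.evalFrom_of_append _ _ _ _,
      eval_pump D heval_xy k, ← heval_xy,
      show D.evalFrom (D.eval (x ++ y)) r = D.eval ((x ++ y) ++ r) from
        (DFA.evalFrom_of_append _ _ _ _).symm, hwfull]
  set wk : ℕ → List ↥A := fun k => x ++ ((List.replicate (k+1) y).flatten ++ r) with hwkdef
  have hwk_len : ∀ k, (wk k).length = x.length + ((k+1) * y.length + r.length) := by
    intro k
    simp [hwkdef, length_flatten_replicate]
  have hwk_ne : ∀ k, wk k ≠ [] := by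
    intro k h
    have h1 := hwk_len k
    have h2 : 1 ≤ (k+1) * y.length := Nat.mul_pos (by omega) (by omega)
    rw [h] at h1
    simp only [List.length_nil] at h1
    omega
  have hwne : w ≠ [] := by rw [hwdef]; exact hf1 s
  have hEk : ∀ k, Eset M₁ (wk k) = Eset M₁ w := by
    intro k
    have h1 := minDFA_eval M₁ (wk k) (hwk_ne k)
    have h2 := minDFA_eval M₁ w hwne
    have h3 : (minDFA M₁).eval (wk k) = (minDFA M₁).eval w := hpump (k+1)
    rw [h1, h2] at h3
    exact (Prod.mk.injEq .. ▸ Option.some_injective _ h3).2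
  have hnoshort : ∀ k, ∀ v : List ↥A, v ≠ [] → v.length < (wk k).length →
      φ v ≠ φ (wk k) := by
    intro k v hv hvl heq
    obtain ⟨q, hq⟩ := (hchar (wk k) (hwk_ne k)).mp ⟨v, hv, hvl, heq⟩
    rw [Set.mem_inter_iff, hEk k] at hq
    have : q ∈ Eset M₁ w ∩ M₁.accept := hq
    rw [hEw] at this
    exact this
  obtain ⟨z, hz⟩ := exists_some_of_ne_nil (Subtype.val : ↥A → S) hyne
  have hφwk : ∀ k, φ (wk k) = op (φ x) (op (some (pw z k)) (φ r)) := by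
    intro k
    rw [hwkdef]
    simp only
    rw [hφ, evalWord_append, evalWord_append, evalWord_flatten_replicate _ hz k]
  have hpw : ∀ m m' : ℕ, m < m' → pw z m ≠ pw z m' := by
    intro m m' hmm heq
    refine hnoshort m' (wk m) (hwk_ne m) ?_ ?_
    · rw [hwk_len m, hwk_len m']
      have : (m+1) * y.length < (m'+1) * y.length :=
        (Nat.mul_lt_mul_right (by omega : 0 < y.length)).mpr (by omega)
      omega
    · rw [hφwk m, hφwk m', heq]
  -- now use the generating set B = A ∪ {z, z²}
  set B : Set S := A ∪ {z, z * z} with hBdef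
  have hBfin : B.Finite := hA.union ((Set.finite_singleton (z*z)).insert z)
  have hBgen : Subsemigroup.closure B = ⊤ := by
    refine le_antisymm le_top ?_
    rw [← hgen]
    exact Subsemigroup.closure_mono Set.subset_union_left
  obtain ⟨Q₂, fQ₂, M₂, hM₂⟩ := hreg B hBfin hBgen
  set N := Fintype.card Q₂ with hNdef
  have zmem : z ∈ B := Set.mem_union_right _ (by simp)
  have tmem : z * z ∈ B := Set.mem_union_right _ (by simp)
  set ℓs : ↥B := ⟨z, zmem⟩ with hℓs
  set ℓt : ↥B := ⟨z * z, tmem⟩ with hℓt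
  set φB := evalWord (Subtype.val : ↥B → S) with hφB
  have hu : φB (List.replicate (N+1) ℓt) = some (pw z (2*N+1)) := by
    rw [hφB, evalWord_replicate]
    rw [show ((ℓt : ↥B) : S) = z * z from rfl, pw_double]
  have hvgen : ∀ c : ℕ, φB (List.replicate (c+1) ℓs) = some (pw z c) := by
    intro c
    rw [hφB, evalWord_replicate]
  have hrepne : ∀ (c : ℕ) (ℓ : ↥B), List.replicate (c+1) ℓ ≠ [] := by
    intro c ℓ h
    have : (List.replicate (c+1) ℓ).length = 0 := by rw [h]; rfl
    simp at this
  set T : Option ↥B × Option ↥B := (some ℓt, some ℓs) with hT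
  set Sp : Option ↥B × Option ↥B := (none, some ℓs) with hSp
  have hpadc : ∀ c : ℕ,
      padPair (List.replicate (N+1) ℓt, List.replicate ((N+1)+c) ℓs)
        = List.replicate (N+1) T ++ List.replicate c Sp := by
    intro c
    show (List.map some (List.replicate (N+1) ℓt) ++
        List.replicate ((List.replicate ((N+1)+c) ℓs).length - (List.replicate (N+1) ℓt).length) none).zip
        (List.map some (List.replicate ((N+1)+c) ℓs) ++
        List.replicate ((List.replicate (N+1) ℓt).length - (List.replicate ((N+1)+c) ℓs).length) none)
        = _
    rw [List.map_replicate, List.map_replicate, List.length_replicate, List.length_replicate]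
    rw [show (N+1)+c - (N+1) = c by omega, show (N+1) - ((N+1)+c) = 0 by omega]
    rw [List.replicate_zero, List.append_nil, List.replicate_add (N+1) c (some ℓs)]
    rw [List.zip_append (by simp)]
    simp [List.zip_replicate, hT, hSp]
  have hSWP1 : (List.replicate (N+1) ℓt, List.replicate ((N+1)+(N+1)) ℓs) ∈ SWP B := by
    refine ⟨hrepne N ℓt, ?_, ?_⟩
    · rw [show (N+1)+(N+1) = (2*N+1)+1 by omega]; exact hrepne _ ℓs
    · show φB _ = φB _
      rw [hu, show (N+1)+(N+1) = (2*N+1)+1 by omega, hvgen (2*N+1)]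
  have haccepts := (hM₂ _).mp hSWP1
  rw [DFA.mem_accepts, hpadc (N+1)] at haccepts
  -- pigeonhole in the padding tail
  have hpigeon2 : ∃ c c' : Fin (N+1), (c : ℕ) < c' ∧
      M₂.evalFrom M₂.start (List.replicate (N+1) T ++ List.replicate (c : ℕ) Sp)
        = M₂.evalFrom M₂.start (List.replicate (N+1) T ++ List.replicate (c' : ℕ) Sp) := by
    obtain ⟨c, c', hcc, heq⟩ := Fintype.exists_ne_map_eq_of_card_lt
      (fun c : Fin (N + 1) =>
        M₂.evalFrom M₂.start (List.replicate (N+1) T ++ List.replicate (c : ℕ) Sp))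
      (by simp [hNdef])
    rcases lt_or_gt_of_ne (fun h => hcc (by exact_mod_cast Fin.ext h) : (c:ℕ) ≠ c') with h | h
    · exact ⟨c, c', h, heq⟩
    · exact ⟨c', c, h, heq.symm⟩
  obtain ⟨c, c', hcc, hstate2⟩ := hpigeon2
  have hsplit : ∀ a b : ℕ,
      M₂.evalFrom M₂.start (List.replicate (N+1) T ++ List.replicate (a+b) Sp)
        = M₂.evalFrom
            (M₂.evalFrom M₂.start (List.replicate (N+1) T ++ List.replicate a Sp))
            (List.replicate b Sp) := by
    intro a b
    rw [List.replicate_add a b Sp, ← List.append_assoc]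
    exact DFA.evalFrom_of_append _ _ _ _
  have hc'le : (c' : ℕ) ≤ N + 1 := le_of_lt c'.isLt
  have haccept2 :
      M₂.evalFrom M₂.start (List.replicate (N+1) T ++
        List.replicate ((c : ℕ) + ((N+1) - c')) Sp) ∈ M₂.accept := by
    have h1 : (N+1 : ℕ) = (c' : ℕ) + ((N+1) - c') := by omega
    have h2 : M₂.eval (List.replicate (N+1) T ++ List.replicate (N+1) Sp)
        = M₂.evalFrom
            (M₂.evalFrom M₂.start (List.replicate (N+1) T ++ List.replicate (c' : ℕ) Sp))
            (List.replicate ((N+1) - c') Sp) := by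
      show M₂.evalFrom M₂.start _ = _
      rw [← hsplit, ← h1]
    rw [h2, ← hstate2, ← hsplit] at haccepts
    exact haccepts
  set d : ℕ := (c : ℕ) + ((N+1) - c') with hd
  have hW' : (List.replicate (N+1) ℓt, List.replicate ((N+1)+d) ℓs) ∈ SWP B := by
    refine (hM₂ _).mpr ?_
    rw [DFA.mem_accepts, hpadc d]
    exact haccept2
  obtain ⟨-, -, heqv⟩ := hW'
  have heqv' : some (pw z (2*N+1)) = some (pw z (N+d)) := by
    have h3 : φB (List.replicate ((N+1)+d) ℓs) = some (pw z (N+d)) := by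
      rw [show (N+1)+d = (N+d)+1 by omega]
      exact hvgen (N+d)
    calc some (pw z (2*N+1)) = φB (List.replicate (N+1) ℓt) := hu.symm
    _ = φB (List.replicate ((N+1)+d) ℓs) := heqv
    _ = some (pw z (N+d)) := h3
  have hdlt : N + d < 2*N+1 := by omega
  exact hpw (N+d) (2*N+1) hdlt (Option.some_injective _ heqv').symm


/-- A finitely generated semigroup has regular word problem with respect to
every finite generating set iff it is finite. -/
theorem stmt_13 {S : Type*} [Semigroup S]
    (hfg : ∃ A : Set S, A.Finite ∧ Subsemigroup.closure A = ⊤) :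
    (∀ A : Set S, A.Finite → Subsemigroup.closure A = ⊤ →
      IsRegularRel (SWP A)) ↔ Finite S := by
  constructor
  · intro hreg
    by_contra hfin
    have : Infinite S := not_finite_iff_infinite.mp hfin
    obtain ⟨A, hA, hgen⟩ := hfg
    exact infinite_not_all_regular hA hgen hreg
  · intro hFin A hA hgen
    exact finite_isRegularRel A
end

section
/- Let M be a finitely generated monoid with rational word problem. Then the group of units U(M) of M is finite. -/
namespace AsyncFSA
variable {A B : Type*}
theorem Reaches.append {N : AsyncFSA A B} {p q r : N.Q} {u1 u2 : List A} {v1 v2 : List B}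
    (h1 : N.Reaches p u1 v1 q) (h2 : N.Reaches q u2 v2 r) :
    N.Reaches p (u1 ++ u2) (v1 ++ v2) r := by
  induction h1 with
  | refl => simpa using h2
  | step ht _ ih =>
      simpa [List.append_assoc] using Reaches.step ht (ih h2)

theorem Reaches.split_nil {N : AsyncFSA A B} {p r : N.Q} {w : List A} {v : List B}
    (h : N.Reaches p w v r) : ∀ u1 u2 : List A, w = u1 ++ u2 → v = [] →
    ∃ q, N.Reaches p u1 [] q ∧ N.Reaches q u2 [] r := by
  induction h with
  | refl q =>
      intro u1 u2 h1 h2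
      obtain ⟨rfl, rfl⟩ := List.append_eq_nil_iff.mp h1.symm
      exact ⟨q, Reaches.refl q, Reaches.refl q⟩
  | @step p' q' r' a b u v ht hr ih =>
      intro u1 u2 h1 h2
      obtain ⟨hb, hv⟩ : b.toList = [] ∧ v = [] := List.append_eq_nil_iff.mp h2
      have hbnone : b = none := by cases b <;> simp_all
      subst hbnone; subst hv
      cases u1 with
      | nil =>
          refine ⟨p', Reaches.refl p', ?_⟩
          have h1' : a.toList ++ u = u2 := by simpa using h1
          exact h1' ▸ Reaches.step ht hr
      | cons c u1' =>
          cases a with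
          | none =>
              simp only [Option.toList, List.nil_append] at h1
              obtain ⟨q, hq1, hq2⟩ := ih (c :: u1') u2 h1 rfl
              exact ⟨q, by simpa using Reaches.step ht hq1, hq2⟩
          | some a' =>
              simp only [Option.toList, List.cons_append, List.cons.injEq] at h1
              obtain ⟨rfl, h1⟩ := h1
              obtain ⟨q, hq1, hq2⟩ := ih u1' u2 h1 rfl
              exact ⟨q, by simpa using Reaches.step ht hq1, hq2⟩

end AsyncFSA

lemma exists_word_aux {M : Type*} [Monoid M] (A : Set M)
    (hgen : Submonoid.closure A = ⊤) (m : M) :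
    ∃ w : List ↥A, (w.map Subtype.val).prod = m := by
  have hm : m ∈ Submonoid.closure A := hgen ▸ Submonoid.mem_top m
  obtain ⟨l, hl, hp⟩ := Submonoid.exists_list_of_mem_closure hm
  refine ⟨l.pmap (fun x hx => ⟨x, hx⟩) hl, ?_⟩
  rw [List.map_pmap]
  simpa [List.pmap_eq_map] using hp

/-- A finitely generated monoid with rational word problem has a finite group
of units. -/
theorem stmt_14 {M : Type*} [Monoid M] (A : Set M) (hA : A.Finite)
    (hgen : Submonoid.closure A = ⊤) (hrat : IsRationalRel (MWP A)) :
    Finite Mˣ := by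
  obtain ⟨N, hN⟩ := hrat
  haveI := N.fin
  choose w hw using fun u : Mˣ => exists_word_aux A hgen (u : M)
  have key : ∀ u : Mˣ, N.Accepts (w u ++ w u⁻¹) [] := by
    intro u
    refine (hN (w u ++ w u⁻¹, ([] : List ↥A))).1 ?_
    show ((w u ++ w u⁻¹).map Subtype.val).prod = _
    rw [List.map_append, List.prod_append, hw, hw]
    simpa using u.mul_inv
  apply Finite.of_injective (fun u : Mˣ => {q : N.Q | N.Reaches N.init (w u) [] q})
  intro u u' h
  obtain ⟨qf, hqf, hr⟩ := key u
  obtain ⟨qm, h1, h2⟩ := hr.split_nil (w u) (w u⁻¹) rfl rfl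
  have h1' : N.Reaches N.init (w u') [] qm := (Set.ext_iff.mp h qm).mp h1
  have hacc : N.Accepts (w u' ++ w u⁻¹) [] :=
    ⟨qf, hqf, by simpa using h1'.append h2⟩
  have hmwp := (hN (w u' ++ w u⁻¹, ([] : List ↥A))).2 hacc
  have hval : (u' : M) * ((u⁻¹ : Mˣ) : M) = 1 := by
    have : ((w u' ++ w u⁻¹).map Subtype.val).prod = (([] : List ↥A).map Subtype.val).prod := hmwp
    rw [List.map_append, List.prod_append, hw, hw] at this
    simpa using this
  have : u' * u⁻¹ = 1 := Units.ext (by simpa using hval)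
  exact (mul_inv_eq_one.mp this).symm
end

section
/- Let S be a finitely generated semigroup with rational word problem. Then every subsemigroup of S that is a group is finite. -/
namespace AsyncFSA

theorem reaches_trans' {A B : Type*} {M : AsyncFSA A B} {p q r : M.Q}
    {u1 u2 : List A} {v1 v2 : List B}
    (h1 : M.Reaches p u1 v1 q) (h2 : M.Reaches q u2 v2 r) :
    M.Reaches p (u1 ++ u2) (v1 ++ v2) r := by
  induction h1 with
  | refl => simpa using h2
  | step ht _ ih => simpa [List.append_assoc] using Reaches.step ht (ih h2)

theorem reaches_split' {A B : Type*} {M : AsyncFSA A B} {p r : M.Q}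
    {w : List A} {v : List B} (h : M.Reaches p w v r) :
    ∀ u1 u2, w = u1 ++ u2 →
      ∃ q v1 v2, v = v1 ++ v2 ∧ M.Reaches p u1 v1 q ∧ M.Reaches q u2 v2 r := by
  induction h with
  | refl q =>
    intro u1 u2 hw
    obtain ⟨h1, h2⟩ := List.append_eq_nil_iff.mp hw.symm
    subst h1; subst h2
    exact ⟨q, [], [], rfl, Reaches.refl q, Reaches.refl q⟩
  | @step p q r a b u v ht hr ih =>
    intro u1 u2 hw
    match u1 with
    | [] =>
      refine ⟨p, [], b.toList ++ v, rfl, Reaches.refl p, ?_⟩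
      simp only [List.nil_append] at hw
      rw [← hw]
      exact Reaches.step ht hr
    | x :: u1' =>
      cases a with
      | none =>
        simp only [Option.toList, List.nil_append] at hw
        obtain ⟨q', v1, v2, hv, hh1, hh2⟩ := ih (x :: u1') u2 hw
        refine ⟨q', b.toList ++ v1, v2, by simp [hv], ?_, hh2⟩
        simpa using Reaches.step ht hh1
      | some a0 =>
        simp only [Option.toList, List.cons_append, List.singleton_append,
          List.cons.injEq] at hw
        obtain ⟨hax, hu⟩ := hw
        obtain ⟨q', v1, v2, hv, hh1, hh2⟩ := ih u1' u2 hu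
        subst hax
        refine ⟨q', b.toList ++ v1, v2, by simp [hv], ?_, hh2⟩
        simpa using Reaches.step ht hh1

end AsyncFSA

theorem foldl_mul_assoc'' {α S : Type*} [Semigroup S] (g : α → S) (l : List α) :
    ∀ x c : S, l.foldl (fun s y => s * g y) (x * c) = x * l.foldl (fun s y => s * g y) c := by
  induction l with
  | nil => intro x c; rfl
  | cons d l ih =>
    intro x c
    simp only [List.foldl_cons]
    rw [mul_assoc]
    exact ih x (c * g d)

theorem evalWord_append' {α S : Type*} [Semigroup S] (g : α → S) {u v : List α} {su sv : S}
    (h1 : evalWord g u = some su) (h2 : evalWord g v = some sv) :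
    evalWord g (u ++ v) = some (su * sv) := by
  match u, v with
  | [], _ => simp [evalWord] at h1
  | _, [] => simp [evalWord] at h2
  | a :: u', b :: v' =>
    simp only [evalWord, Option.some.injEq] at h1 h2
    rw [List.cons_append]
    simp only [evalWord, Option.some.injEq]
    rw [List.foldl_append, h1, List.foldl_cons, foldl_mul_assoc'', ← h2]

theorem evalWord_ne_nil' {α S : Type*} [Semigroup S] (g : α → S) {v : List α} (hv : v ≠ []) :
    ∃ s, evalWord g v = some s := by
  cases v with
  | nil => exact absurd rfl hv
  | cons a l => exact ⟨_, rfl⟩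

theorem exists_evalWord' {S : Type*} [Semigroup S] {A : Set S}
    (hgen : Subsemigroup.closure A = ⊤) (s : S) :
    ∃ w : List ↥A, w ≠ [] ∧ evalWord Subtype.val w = some s := by
  have hs : s ∈ Subsemigroup.closure A := by rw [hgen]; trivial
  induction hs using Subsemigroup.closure_induction with
  | mem a ha => exact ⟨[⟨a, ha⟩], by simp, rfl⟩
  | mul x y hx' hy' hx hy =>
    obtain ⟨wx, hwx0, hwx⟩ := hx
    obtain ⟨wy, hwy0, hwy⟩ := hy
    exact ⟨wx ++ wy, by simp [hwx0], evalWord_append' _ hwx hwy⟩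

/-- Every subsemigroup of a semigroup with rational word problem that is a
group is finite. -/
theorem stmt_15 {S : Type*} [Semigroup S] (A : Set S) (hA : A.Finite)
    (hgen : Subsemigroup.closure A = ⊤) (hrat : IsRationalRel (SWP A)) :
    ∀ T : Subsemigroup S,
      (∃ e ∈ T, (∀ x ∈ T, e * x = x ∧ x * e = x) ∧
        ∀ x ∈ T, ∃ y ∈ T, x * y = e ∧ y * x = e) →
      (T : Set S).Finite := by
  classical
  intro T hT
  obtain ⟨e, heT, hid, hinv⟩ := hT
  obtain ⟨M, hM⟩ := hrat
  haveI := M.fin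
  haveI : Fintype M.Q := Fintype.ofFinite M.Q
  haveI : Finite ↥A := hA.to_subtype
  obtain ⟨f, hf0, hfe⟩ := exists_evalWord' hgen e
  set c : ℕ := f.length + 1 with hc
  set N : ℕ := Fintype.card M.Q with hN
  have hN1 : 1 ≤ N := Fintype.card_pos_iff.mpr ⟨M.init⟩
  set Bd : ℕ := N * c * c with hBd
  have key : ∀ y ∈ T, ∃ w : List ↥A,
      w.length ≤ Bd ∧ evalWord Subtype.val w = some y := by
    intro y hyT
    obtain ⟨x, hxT, hyx, hxy⟩ := hinv y hyT
    have hex : ∃ n, ∃ w : List ↥A, w.length = n ∧ w ≠ [] ∧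
        evalWord Subtype.val w = some y := by
      obtain ⟨w, hw0, hw⟩ := exists_evalWord' hgen y
      exact ⟨w.length, w, rfl, hw0, hw⟩
    obtain ⟨v, hvlen, hv0, hvy⟩ := Nat.find_spec hex
    have hmin : ∀ w : List ↥A, w ≠ [] → evalWord Subtype.val w = some y →
        Nat.find hex ≤ w.length := fun w h0 hw => Nat.find_le ⟨w, rfl, h0, hw⟩
    refine ⟨v, ?_, hvy⟩
    rw [hvlen]
    by_contra hlong
    push_neg at hlong
    -- hlong : Bd < Nat.find hex, and v.length = Nat.find hex
    have hvB : Bd < v.length := hvlen ▸ hlong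
    obtain ⟨u, hu0, hux⟩ := exists_evalWord' hgen x
    have hswp : (u ++ v, f) ∈ SWP A := by
      refine ⟨by simp [hu0], hf0, ?_⟩
      show evalWord Subtype.val (u ++ v) = evalWord Subtype.val f
      rw [evalWord_append' _ hux hvy, hfe, hxy]
    obtain ⟨qf, hqf, hrun⟩ := (hM (u ++ v, f)).mp hswp
    dsimp only at hrun
    have key2 : ∀ t : Fin (N * c + 1), ∃ (q : M.Q) (k : Fin c),
        M.Reaches M.init (u ++ v.take ((t : ℕ) * c)) (f.take (k : ℕ)) q ∧
        M.Reaches q (v.drop ((t : ℕ) * c)) (f.drop (k : ℕ)) qf := by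
      intro t
      obtain ⟨q, v1, v2, hv12, h1, h2⟩ := AsyncFSA.reaches_split' hrun
        (u ++ v.take ((t : ℕ) * c)) (v.drop ((t : ℕ) * c))
        (by rw [List.append_assoc, List.take_append_drop])
      have hlen : v1.length ≤ f.length := by
        rw [hv12]; simp
      refine ⟨q, ⟨v1.length, by omega⟩, ?_, ?_⟩
      · have ht : f.take v1.length = v1 := by rw [hv12]; exact List.take_left
        rw [ht]; exact h1
      · have hd : f.drop v1.length = v2 := by rw [hv12]; exact List.drop_left
        rw [hd]; exact h2
    choose qof kof hq1 hq2 using key2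
    have hcard : Fintype.card (M.Q × Fin c) < Fintype.card (Fin (N * c + 1)) := by
      simp [hN]
    obtain ⟨a, b, hab, heq⟩ :=
      Fintype.exists_ne_map_eq_of_card_lt (fun t => (qof t, kof t)) hcard
    have hkey3 : ∃ t1 t2 : Fin (N * c + 1), (t1 : ℕ) < (t2 : ℕ) ∧
        qof t1 = qof t2 ∧ kof t1 = kof t2 := by
      rw [Prod.mk.injEq] at heq
      rcases lt_or_gt_of_ne hab with h | h
      · exact ⟨a, b, h, heq.1, heq.2⟩
      · exact ⟨b, a, h, heq.1.symm, heq.2.symm⟩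
    obtain ⟨t1, t2, ht12, hqeq, hkeq⟩ := hkey3
    set i : ℕ := (t1 : ℕ) * c with hi
    set j : ℕ := (t2 : ℕ) * c with hj
    have hij : i + c ≤ j := by
      have : (t1 : ℕ) + 1 ≤ (t2 : ℕ) := ht12
      calc i + c = ((t1 : ℕ) + 1) * c := by ring
      _ ≤ (t2 : ℕ) * c := Nat.mul_le_mul_right c this
      _ = j := rfl
    have hjv : j ≤ v.length := by
      have ht2 : (t2 : ℕ) ≤ N * c := Nat.lt_succ_iff.mp t2.isLt
      have : j ≤ N * c * c := Nat.mul_le_mul_right c ht2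
      omega
    -- combine the two runs
    have hrun1 := hq1 t1
    have hrun2 := hq2 t2
    rw [hqeq, hkeq] at hrun1
    have hcomb := AsyncFSA.reaches_trans' hrun1 hrun2
    rw [List.take_append_drop] at hcomb
    set v' : List ↥A := v.take i ++ v.drop j with hv'
    have hcomb' : M.Reaches M.init (u ++ v') f qf := by
      rw [hv', ← List.append_assoc]; exact hcomb
    have hswp' : (u ++ v', f) ∈ SWP A := (hM (u ++ v', f)).mpr ⟨qf, hqf, hcomb'⟩
    obtain ⟨-, -, heval⟩ := hswp'
    have hevalf : evalWord Subtype.val (u ++ v') = some e := by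
      rw [heval]; exact hfe
    have hv'len : v'.length ≤ v.length - c := by
      have h1 : (v.take i).length = i := List.length_take_of_le (by omega)
      have h2 : (v.drop j).length = v.length - j := List.length_drop
      simp only [hv', List.length_append, h1, h2]
      omega
    rcases eq_or_ne v' [] with hv'nil | hv'ne
    · -- then x = e, so y = e, and f is a shorter word for y
      rw [hv'nil, List.append_nil, hux] at hevalf
      have hxe : x = e := by injection hevalf
      have hye : y = e := by
        have := (hid y hyT).2
        rw [hxe] at hyx
        rw [← hyx, this]
      have := hmin f hf0 (by rw [hye]; exact hfe)
      omega
    · obtain ⟨sv, hsv⟩ := evalWord_ne_nil' (Subtype.val : ↥A → S) hv'ne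
      rw [evalWord_append' _ hux hsv] at hevalf
      have hxsv : x * sv = e := by injection hevalf
      have hy' : y = e * sv := by
        calc y = y * e := ((hid y hyT).2).symm
        _ = y * (x * sv) := by rw [hxsv]
        _ = (y * x) * sv := (mul_assoc _ _ _).symm
        _ = e * sv := by rw [hyx]
      have hword : evalWord Subtype.val (f ++ v') = some y := by
        rw [evalWord_append' _ hfe hsv, ← hy']
      have := hmin (f ++ v') (by simp [hf0]) hword
      rw [List.length_append] at this
      omega
  have hsub : (T : Set S) ⊆
      (fun w : List ↥A => (evalWord Subtype.val w).getD e) '' {w | w.length ≤ Bd} := by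
    intro y hy
    obtain ⟨w, hlen, hw⟩ := key y hy
    exact ⟨w, hlen, by simp [hw]⟩
  exact Set.Finite.subset (Set.Finite.image _ (List.finite_length_le _ _)) hsub
end

section
/- Let S be a finitely generated semigroup. Then S has rational word problem if and only if S¹ (S with an identity adjoined) has rational word problem, and if and only if S⁰ (S with a zero adjoined) has rational word problem. -/
section WPAux

namespace AsyncFSA

variable {C D C' D' : Type*}

theorem reaches_append (M : AsyncFSA C D) {u' : List C} {v' : List D} {r : M.Q} :
    ∀ {p q : M.Q} {u : List C} {v : List D}, M.Reaches p u v q →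
      M.Reaches q u' v' r → M.Reaches p (u ++ u') (v ++ v') r := by
  intro p q u v h1
  induction h1 with
  | refl => intro h2; simpa using h2
  | step ht _ ih =>
    intro h2
    simpa [List.append_assoc] using Reaches.step ht (ih h2)

/-- Automaton for the inverse image of a relation under `filterMap`. -/
def fmA (M : AsyncFSA C D) (g₁ : C' → Option C) (g₂ : D' → Option D) : AsyncFSA C' D' where
  Q := M.Q
  fin := M.fin
  init := M.init
  accept := M.accept
  trans q a b q' := M.trans q (a.bind g₁) (b.bind g₂) q' ∨
    (q' = q ∧ a.bind g₁ = none ∧ b.bind g₂ = none)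

theorem toList_bind (g : C' → Option C) (a : Option C') :
    (a.bind g).toList = a.toList.filterMap g := by
  cases a with
  | none => simp
  | some x => cases h : g x <;> simp [h]

theorem fmA_forward {M : AsyncFSA C D} {g₁ : C' → Option C} {g₂ : D' → Option D}
    {p q : (fmA M g₁ g₂).Q} {u : List C'} {v : List D'} (h : (fmA M g₁ g₂).Reaches p u v q) :
    M.Reaches p (u.filterMap g₁) (v.filterMap g₂) q := by
  induction h with
  | refl => exact .refl _
  | step ht _ ih =>
    rcases ht with ht | ⟨rfl, h1, h2⟩
    · simpa [List.filterMap_append, toList_bind] using Reaches.step ht ih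
    · simpa [List.filterMap_append, ← toList_bind, h1, h2] using ih

theorem fmA_skip {M : AsyncFSA C D} {g₁ : C' → Option C} {g₂ : D' → Option D} {q : M.Q} :
    ∀ (u : List C') (v : List D'), (∀ x ∈ u, g₁ x = none) → (∀ x ∈ v, g₂ x = none) →
      (fmA M g₁ g₂).Reaches q u v q := by
  intro u
  induction u with
  | nil =>
    intro v
    induction v with
    | nil => intro _ _; exact .refl _
    | cons y v ih =>
      intro _ hv
      have ht : (fmA M g₁ g₂).trans q none (some y) q :=
        Or.inr ⟨rfl, rfl, by simp [hv y (by simp)]⟩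
      simpa using Reaches.step ht (ih (by simp) (fun x hx => hv x (by simp [hx])))
  | cons x u ih =>
    intro v hu hv
    have ht : (fmA M g₁ g₂).trans q (some x) none q :=
      Or.inr ⟨rfl, by simp [hu x (by simp)], rfl⟩
    simpa using Reaches.step ht (ih v (fun z hz => hu z (by simp [hz])) hv)

theorem fmA_decomp (g : C' → Option C) (a : Option C) (u : List C') (L : List C)
    (h : a.toList ++ L = u.filterMap g) :
    ∃ (u₁ : List C') (a' : Option C') (u₂ : List C'), u = u₁ ++ a'.toList ++ u₂ ∧ (∀ x ∈ u₁, g x = none) ∧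
      a'.bind g = a ∧ u₂.filterMap g = L := by
  cases a with
  | none => exact ⟨[], none, u, by simp, by simp, rfl, by simpa using h.symm⟩
  | some c =>
    obtain ⟨l₁, x, l₂, rfl, h1, h2, h3⟩ := List.filterMap_eq_cons_iff.mp h.symm
    exact ⟨l₁, some x, l₂, by simp, h1, by simpa using h2, h3⟩

theorem fmA_backward {M : AsyncFSA C D} {g₁ : C' → Option C} {g₂ : D' → Option D} :
    ∀ {p q : M.Q} {ub : List C} {vb : List D}, M.Reaches p ub vb q →
      ∀ (u : List C') (v : List D'), ub = u.filterMap g₁ → vb = v.filterMap g₂ →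
      (fmA M g₁ g₂).Reaches p u v q := by
  intro p q ub vb h
  induction h with
  | refl =>
    intro u v hu hv
    exact fmA_skip u v (List.filterMap_eq_nil_iff.mp hu.symm)
      (List.filterMap_eq_nil_iff.mp hv.symm)
  | step ht _ ih =>
    intro u v hu hv
    obtain ⟨u₁, a', u₂, rfl, hu1, ha', hu2⟩ := fmA_decomp g₁ _ u _ hu
    obtain ⟨v₁, b', v₂, rfl, hv1, hb', hv2⟩ := fmA_decomp g₂ _ v _ hv
    have t1 : (fmA M g₁ g₂).trans _ a' b' _ := Or.inl (by rw [ha', hb']; exact ht)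
    have r2 := Reaches.step t1 (ih u₂ v₂ hu2.symm hv2.symm)
    simpa [List.append_assoc] using reaches_append _ (fmA_skip u₁ v₁ hu1 hv1) r2

end AsyncFSA

theorem isRationalRel_filterMap {C D C' D' : Type*} {g₁ : C' → Option C} {g₂ : D' → Option D}
    {R : Set (List C × List D)} (h : IsRationalRel R) :
    IsRationalRel {p : List C' × List D' | (p.1.filterMap g₁, p.2.filterMap g₂) ∈ R} := by
  obtain ⟨M, hM⟩ := h
  refine ⟨AsyncFSA.fmA M g₁ g₂, ?_⟩
  rintro ⟨u, v⟩
  simp only [Set.mem_setOf_eq, hM]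
  constructor
  · rintro ⟨q, hq, hr⟩; exact ⟨q, hq, AsyncFSA.fmA_backward hr u v rfl rfl⟩
  · rintro ⟨q, hq, hr⟩; exact ⟨q, hq, AsyncFSA.fmA_forward hr⟩

end WPAux
section WPAux2

namespace AsyncFSA

variable {C D C' D' : Type*}

/-- Automaton for the image of a relation under componentwise `map`. -/
def mapA (M : AsyncFSA C D) (f₁ : C → C') (f₂ : D → D') : AsyncFSA C' D' where
  Q := M.Q
  fin := M.fin
  init := M.init
  accept := M.accept
  trans q a b q' := ∃ a₀ b₀, a = a₀.map f₁ ∧ b = b₀.map f₂ ∧ M.trans q a₀ b₀ q'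

theorem toList_omap (f : C → C') (a : Option C) :
    (a.map f).toList = a.toList.map f := by cases a <;> simp

theorem mapA_forward {M : AsyncFSA C D} {f₁ : C → C'} {f₂ : D → D'}
    {p q : (mapA M f₁ f₂).Q} {u : List C'} {v : List D'} (h : (mapA M f₁ f₂).Reaches p u v q) :
    ∃ u₀ v₀, M.Reaches p u₀ v₀ q ∧ u = u₀.map f₁ ∧ v = v₀.map f₂ := by
  induction h with
  | refl => exact ⟨[], [], .refl _, rfl, rfl⟩
  | step ht _ ih =>
    obtain ⟨a₀, b₀, rfl, rfl, ht⟩ := ht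
    obtain ⟨u₀, v₀, hr, rfl, rfl⟩ := ih
    exact ⟨a₀.toList ++ u₀, b₀.toList ++ v₀, .step ht hr,
      by simp [toList_omap], by simp [toList_omap]⟩

theorem mapA_backward {M : AsyncFSA C D} {f₁ : C → C'} {f₂ : D → D'}
    {p q : M.Q} {u : List C} {v : List D} (h : M.Reaches p u v q) :
    (mapA M f₁ f₂).Reaches p (u.map f₁) (v.map f₂) q := by
  induction h with
  | refl => exact .refl _
  | step ht _ ih =>
    have t1 : (mapA M f₁ f₂).trans _ _ _ _ := ⟨_, _, rfl, rfl, ht⟩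
    simpa [toList_omap] using Reaches.step t1 ih

/-- Union automaton. -/
def unionA (M₁ M₂ : AsyncFSA C D) : AsyncFSA C D where
  Q := Option (M₁.Q ⊕ M₂.Q)
  fin := by
    haveI := M₁.fin; haveI := M₂.fin
    exact Finite.of_equiv _ (Equiv.optionEquivSumPUnit.{0,0} _).symm
  init := none
  accept := {s | (∃ q ∈ M₁.accept, s = some (Sum.inl q)) ∨
    (∃ q ∈ M₂.accept, s = some (Sum.inr q))}
  trans s a b t :=
    match s, t with
    | none, some (Sum.inl q) => a = none ∧ b = none ∧ q = M₁.init
    | none, some (Sum.inr q) => a = none ∧ b = none ∧ q = M₂.init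
    | some (Sum.inl p), some (Sum.inl q) => M₁.trans p a b q
    | some (Sum.inr p), some (Sum.inr q) => M₂.trans p a b q
    | _, _ => False

theorem unionA_lift₁ {M₁ M₂ : AsyncFSA C D} {p q : M₁.Q} {u v}
    (h : M₁.Reaches p u v q) :
    (unionA M₁ M₂).Reaches (some (Sum.inl p)) u v (some (Sum.inl q)) := by
  induction h with
  | refl => exact .refl _
  | @step p' m' r' a b u' v' ht _ ih =>
    exact Reaches.step
      (show (unionA M₁ M₂).trans (some (Sum.inl p')) a b (some (Sum.inl m')) from ht) ih

theorem unionA_lift₂ {M₁ M₂ : AsyncFSA C D} {p q : M₂.Q} {u v}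
    (h : M₂.Reaches p u v q) :
    (unionA M₁ M₂).Reaches (some (Sum.inr p)) u v (some (Sum.inr q)) := by
  induction h with
  | refl => exact .refl _
  | @step p' m' r' a b u' v' ht _ ih =>
    exact Reaches.step
      (show (unionA M₁ M₂).trans (some (Sum.inr p')) a b (some (Sum.inr m')) from ht) ih

theorem unionA_proj₁ {M₁ M₂ : AsyncFSA C D} :
    ∀ {s t u v}, (unionA M₁ M₂).Reaches s u v t → ∀ p, s = some (Sum.inl p) →
      ∃ q, t = some (Sum.inl q) ∧ M₁.Reaches p u v q := by
  intro s t u v h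
  induction h with
  | refl => intro p hp; exact ⟨p, hp, .refl _⟩
  | @step _ m _ a b _ _ ht _ ih =>
    intro p hp; subst hp
    rcases m with _ | q₁ | q₁
    · exact absurd ht (by simp [unionA])
    · obtain ⟨q, rfl, hr⟩ := ih q₁ rfl
      exact ⟨q, rfl, .step ht hr⟩
    · exact absurd ht (by simp [unionA])

theorem unionA_proj₂ {M₁ M₂ : AsyncFSA C D} :
    ∀ {s t u v}, (unionA M₁ M₂).Reaches s u v t → ∀ p, s = some (Sum.inr p) →
      ∃ q, t = some (Sum.inr q) ∧ M₂.Reaches p u v q := by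
  intro s t u v h
  induction h with
  | refl => intro p hp; exact ⟨p, hp, .refl _⟩
  | @step _ m _ a b _ _ ht _ ih =>
    intro p hp; subst hp
    rcases m with _ | q₁ | q₁
    · exact absurd ht (by simp [unionA])
    · exact absurd ht (by simp [unionA])
    · obtain ⟨q, rfl, hr⟩ := ih q₁ rfl
      exact ⟨q, rfl, .step ht hr⟩

theorem unionA_accepts {M₁ M₂ : AsyncFSA C D} {u v} :
    (unionA M₁ M₂).Accepts u v ↔ M₁.Accepts u v ∨ M₂.Accepts u v := by
  constructor
  · rintro ⟨t, ht, hr⟩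
    cases hr with
    | refl => rcases ht with ⟨q, _, h⟩ | ⟨q, _, h⟩ <;> simp [unionA] at h
    | @step _ m _ a b _ _ htr hrest =>
      rcases m with _ | q₁ | q₁
      · exact absurd htr (by simp [unionA])
      · obtain ⟨rfl, rfl, rfl⟩ := htr
        obtain ⟨q', ht', hr'⟩ := unionA_proj₁ hrest _ rfl
        rcases ht with ⟨qa, hqa, hteq⟩ | ⟨qa, hqa, hteq⟩
        · rw [ht'] at hteq
          obtain rfl : q' = qa := by simpa using hteq
          exact Or.inl ⟨q', hqa, by simpa using hr'⟩
        · rw [ht'] at hteq; simp at hteq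
      · obtain ⟨rfl, rfl, rfl⟩ := htr
        obtain ⟨q', ht', hr'⟩ := unionA_proj₂ hrest _ rfl
        rcases ht with ⟨qa, hqa, hteq⟩ | ⟨qa, hqa, hteq⟩
        · rw [ht'] at hteq; simp at hteq
        · rw [ht'] at hteq
          obtain rfl : q' = qa := by simpa using hteq
          exact Or.inr ⟨q', hqa, by simpa using hr'⟩
  · rintro (⟨q, hq, hr⟩ | ⟨q, hq, hr⟩)
    · refine ⟨some (Sum.inl q), Or.inl ⟨q, hq, rfl⟩, ?_⟩
      have t0 : (unionA M₁ M₂).trans none none none (some (Sum.inl M₁.init)) := ⟨rfl, rfl, rfl⟩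
      show (unionA M₁ M₂).Reaches none u v _
      simpa using Reaches.step t0 (unionA_lift₁ hr)
    · refine ⟨some (Sum.inr q), Or.inr ⟨q, hq, rfl⟩, ?_⟩
      have t0 : (unionA M₁ M₂).trans none none none (some (Sum.inr M₂.init)) := ⟨rfl, rfl, rfl⟩
      show (unionA M₁ M₂).Reaches none u v _
      simpa using Reaches.step t0 (unionA_lift₂ hr)

/-- Product automaton of two one-tape DFAs. -/
def prodA {Q₁ Q₂ : Type} [Finite Q₁] [Finite Q₂] (M₁ : DFA C Q₁) (M₂ : DFA D Q₂) :
    AsyncFSA C D where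
  Q := Q₁ × Q₂
  fin := inferInstance
  init := (M₁.start, M₂.start)
  accept := {s | s.1 ∈ M₁.accept ∧ s.2 ∈ M₂.accept}
  trans s a b t := t = (a.elim s.1 (M₁.step s.1), b.elim s.2 (M₂.step s.2))

theorem prodA_forward {Q₁ Q₂ : Type} [Finite Q₁] [Finite Q₂] {M₁ : DFA C Q₁} {M₂ : DFA D Q₂}
    {s t : (prodA M₁ M₂).Q} {u v} (h : (prodA M₁ M₂).Reaches s u v t) :
    t = (M₁.evalFrom s.1 u, M₂.evalFrom s.2 v) := by
  induction h with
  | refl => rfl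
  | @step _ m _ a b _ _ ht _ ih =>
    rw [show m = _ from ht] at ih
    rw [ih]
    cases a <;> cases b <;> simp [DFA.evalFrom] <;> rfl

theorem prodA_backward {Q₁ Q₂ : Type} [Finite Q₁] [Finite Q₂] {M₁ : DFA C Q₁} {M₂ : DFA D Q₂} :
    ∀ (u : List C) (v : List D) (s : Q₁ × Q₂),
      (prodA M₁ M₂).Reaches s u v (M₁.evalFrom s.1 u, M₂.evalFrom s.2 v) := by
  intro u
  induction u with
  | nil =>
    intro v
    induction v with
    | nil => intro s; simpa [DFA.evalFrom] using Reaches.refl (M := prodA M₁ M₂) s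
    | cons y v ih =>
      intro s
      have t0 : (prodA M₁ M₂).trans s none (some y) (s.1, M₂.step s.2 y) := by
        simp [prodA]
      have := Reaches.step t0 (ih (s.1, M₂.step s.2 y))
      simpa [DFA.evalFrom] using this
  | cons x u ih =>
    intro v s
    have t0 : (prodA M₁ M₂).trans s (some x) none (M₁.step s.1 x, s.2) := by
      simp [prodA]
    have := Reaches.step t0 (ih v (M₁.step s.1 x, s.2))
    simpa [DFA.evalFrom] using this

theorem prodA_accepts {Q₁ Q₂ : Type} [Finite Q₁] [Finite Q₂] {M₁ : DFA C Q₁} {M₂ : DFA D Q₂}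
    {u v} : (prodA M₁ M₂).Accepts u v ↔ u ∈ M₁.accepts ∧ v ∈ M₂.accepts := by
  constructor
  · rintro ⟨t, ht, hr⟩
    have hf := prodA_forward hr
    subst hf
    rw [DFA.mem_accepts, DFA.mem_accepts]
    exact ⟨ht.1, ht.2⟩
  · rintro ⟨h₁, h₂⟩
    rw [DFA.mem_accepts] at h₁ h₂
    exact ⟨(M₁.eval u, M₂.eval v), ⟨h₁, h₂⟩, prodA_backward u v _⟩

end AsyncFSA

theorem isRationalRel_map {C D C' D' : Type*} {f₁ : C → C'} {f₂ : D → D'}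
    {R : Set (List C × List D)} (h : IsRationalRel R) :
    IsRationalRel {p : List C' × List D' | ∃ q ∈ R, p.1 = q.1.map f₁ ∧ p.2 = q.2.map f₂} := by
  obtain ⟨M, hM⟩ := h
  refine ⟨AsyncFSA.mapA M f₁ f₂, ?_⟩
  rintro ⟨u, v⟩
  simp only [Set.mem_setOf_eq]
  constructor
  · rintro ⟨⟨u₀, v₀⟩, hq, rfl, rfl⟩
    obtain ⟨t, ht, hr⟩ := (hM _).mp hq
    exact ⟨t, ht, AsyncFSA.mapA_backward hr⟩
  · rintro ⟨t, ht, hr⟩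
    obtain ⟨u₀, v₀, hr', rfl, rfl⟩ := AsyncFSA.mapA_forward hr
    exact ⟨(u₀, v₀), (hM _).mpr ⟨t, ht, hr'⟩, rfl, rfl⟩

theorem isRationalRel_union {C D : Type*} {R₁ R₂ : Set (List C × List D)}
    (h₁ : IsRationalRel R₁) (h₂ : IsRationalRel R₂) : IsRationalRel (R₁ ∪ R₂) := by
  obtain ⟨M₁, hM₁⟩ := h₁
  obtain ⟨M₂, hM₂⟩ := h₂
  refine ⟨AsyncFSA.unionA M₁ M₂, ?_⟩
  intro p
  rw [Set.mem_union, hM₁ p, hM₂ p]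
  exact (AsyncFSA.unionA_accepts).symm

theorem isRationalRel_prod {C D : Type*} {L₁ : Set (List C)} {L₂ : Set (List D)}
    (h₁ : ∃ (Q : Type) (_ : Fintype Q) (M : DFA C Q), ∀ w, w ∈ L₁ ↔ w ∈ M.accepts)
    (h₂ : ∃ (Q : Type) (_ : Fintype Q) (M : DFA D Q), ∀ w, w ∈ L₂ ↔ w ∈ M.accepts) :
    IsRationalRel (L₁ ×ˢ L₂) := by
  obtain ⟨Q₁, i₁, M₁, hM₁⟩ := h₁
  obtain ⟨Q₂, i₂, M₂, hM₂⟩ := h₂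
  have : Finite Q₁ := ⟨i₁.equivFin⟩
  have : Finite Q₂ := ⟨i₂.equivFin⟩
  refine ⟨AsyncFSA.prodA M₁ M₂, ?_⟩
  rintro ⟨u, v⟩
  rw [Set.mem_prod, hM₁ u, hM₂ v]
  exact (AsyncFSA.prodA_accepts).symm

end WPAux2
section WPAux3

variable {α β S T : Type*} [Semigroup S] [Semigroup T]

theorem evalWord_foldl (f : α → S) :
    ∀ (l : List α) (s : S),
      List.foldl (fun t x => t * f x) s l = (evalWord f l).elim s (fun r => s * r) := by
  intro l
  induction l with
  | nil => intro s; simp [evalWord]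
  | cons b l ih =>
    intro s
    rw [List.foldl_cons, ih]
    have h1 : evalWord f (b :: l) = some (List.foldl (fun s x => s * f x) (f b) l) := rfl
    rw [h1, ih (f b)]
    cases evalWord f l <;> simp [mul_assoc]

theorem evalWord_cons (f : α → S) (a : α) (l : List α) :
    evalWord f (a :: l) = some ((evalWord f l).elim (f a) (fun r => f a * r)) := by
  have h1 : evalWord f (a :: l) = some (List.foldl (fun s x => s * f x) (f a) l) := rfl
  rw [h1, evalWord_foldl]

theorem evalWord_eq_none {f : α → S} {l : List α} : evalWord f l = none ↔ l = [] := by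
  cases l <;> simp [evalWord]

theorem evalWord_hom (φ : S →ₙ* T) (f : α → S) :
    ∀ l : List α, evalWord (fun a => φ (f a)) l = (evalWord f l).map φ := by
  intro l
  induction l with
  | nil => simp [evalWord]
  | cons a l ih =>
    rw [evalWord_cons, evalWord_cons, ih]
    cases evalWord f l <;> simp [map_mul]

theorem evalWord_map_list (f : β → S) (h : α → β) (l : List α) :
    evalWord f (l.map h) = evalWord (fun x => f (h x)) l := by
  cases l with
  | nil => rfl
  | cons a l => simp [evalWord, List.foldl_map]

end WPAux3
section WPAux4

theorem lang_nilFilter_regular {γ δ : Type*} (g : γ → Option δ) :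
    ∃ (Q : Type) (_ : Fintype Q) (M : DFA γ Q),
      ∀ w, ((w ≠ [] ∧ w.filterMap g = []) ↔ w ∈ M.accepts) := by
  refine ⟨Bool × Bool, inferInstance,
    ⟨fun s x => (true, s.2 || (g x).isSome), (false, false), {(true, false)}⟩, ?_⟩
  set M : DFA γ (Bool × Bool) :=
    ⟨fun s x => (true, s.2 || (g x).isSome), (false, false), {(true, false)}⟩ with hMdef
  have hev : ∀ (w : List γ) (s : Bool × Bool),
      M.evalFrom s w = (s.1 || !w.isEmpty, s.2 || w.any fun x => (g x).isSome) := by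
    intro w
    induction w with
    | nil => intro s; simp [DFA.evalFrom]
    | cons x l ih =>
      intro s
      have h1 : M.evalFrom s (x :: l) = M.evalFrom (M.step s x) l := rfl
      rw [h1, ih]
      simp [hMdef, Bool.or_assoc]
  intro w
  rw [DFA.mem_accepts]
  show _ ↔ M.evalFrom M.start w ∈ ({((true : Bool), (false : Bool))} : Set (Bool × Bool))
  rw [hev]
  simp [hMdef, Prod.ext_iff, List.filterMap_eq_nil_iff, List.any_eq_true,
    Option.isSome_iff_exists, List.isEmpty_iff, Option.eq_none_iff_forall_not_mem,
    Option.mem_def]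

theorem lang_existsP_regular {γ : Type*} (P : γ → Prop) [DecidablePred P] :
    ∃ (Q : Type) (_ : Fintype Q) (M : DFA γ Q),
      ∀ w, ((∃ x ∈ w, P x) ↔ w ∈ M.accepts) := by
  refine ⟨Bool, inferInstance, ⟨fun s x => s || decide (P x), false, {true}⟩, ?_⟩
  set M : DFA γ Bool := ⟨fun s x => s || decide (P x), false, {true}⟩ with hMdef
  have hev : ∀ (w : List γ) (s : Bool),
      M.evalFrom s w = (s || w.any fun x => decide (P x)) := by
    intro w
    induction w with
    | nil => intro s; simp [DFA.evalFrom]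
    | cons x l ih =>
      intro s
      have h1 : M.evalFrom s (x :: l) = M.evalFrom (M.step s x) l := rfl
      rw [h1, ih]
      simp [hMdef, Bool.or_assoc]
  intro w
  rw [DFA.mem_accepts]
  show _ ↔ M.evalFrom M.start w ∈ ({true} : Set Bool)
  rw [hev]
  simp [hMdef, List.any_eq_true]

end WPAux4
section WPGlueOne

variable {S : Type*} [Semigroup S]

theorem swp_one_forward {A : Set S} (hA : IsRationalRel (SWP A)) :
    IsRationalRel (SWP ((fun s : S => (s : WithOne S)) '' A ∪ {1})) := by
  classical
  set B : Set (WithOne S) := (fun s : S => (s : WithOne S)) '' A ∪ {1} with hBdef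
  have hmem : ∀ x : ↥B, x.val = 1 ∨ ∃ a : ↥A, x.val = ((a : S) : WithOne S) := by
    rintro ⟨x, hx⟩
    rcases hx with ⟨a, ha, rfl⟩ | hx
    · exact Or.inr ⟨⟨a, ha⟩, rfl⟩
    · exact Or.inl hx
  obtain ⟨g, hg_none, hg_some⟩ :
      ∃ g : ↥B → Option ↥A,
        (∀ x : ↥B, g x = none → x.val = 1) ∧
        (∀ (x : ↥B) (a : ↥A), g x = some a → x.val = ((a : S) : WithOne S)) := by
    refine ⟨fun x => if h : ∃ a : ↥A, x.val = ((a : S) : WithOne S) then some h.choose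
      else none, ?_, ?_⟩
    · intro x hx
      rcases hmem x with h1 | h2
      · exact h1
      · simp only [dif_pos h2] at hx; cases hx
    · intro x a hx
      by_cases h : ∃ a : ↥A, x.val = ((a : S) : WithOne S)
      · simp only [dif_pos h] at hx
        obtain rfl := Option.some_injective _ hx
        exact h.choose_spec
      · simp only [dif_neg h] at hx; cases hx
  have key : ∀ w : List ↥B, w ≠ [] →
      evalWord Subtype.val w =
        some ((evalWord (Subtype.val : ↥A → S) (w.filterMap g)).elim (1 : WithOne S)
          (fun s => (s : WithOne S))) := by
    intro w
    induction w with
    | nil => intro h; exact absurd rfl h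
    | cons x l ih =>
      intro _
      rw [evalWord_cons]
      by_cases hl : l = []
      · subst hl
        rcases hx : g x with _ | a
        · have h1 := hg_none x hx
          simp [evalWord, List.filterMap_cons, hx, h1]
        · have h1 := hg_some x a hx
          simp [evalWord, List.filterMap_cons, hx, h1]
      · rw [ih hl]
        rcases hx : g x with _ | a
        · have h1 := hg_none x hx
          rw [List.filterMap_cons_none hx]
          simp [h1]
        · have h1 := hg_some x a hx
          rw [List.filterMap_cons_some hx, evalWord_cons]
          cases hev : evalWord (Subtype.val : ↥A → S) (l.filterMap g) <;>
            simp [hev, h1, mul_one, ← WithOne.coe_mul]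
  have hswp : SWP B =
      {p : List ↥B × List ↥B | (p.1.filterMap g, p.2.filterMap g) ∈ SWP A} ∪
        ({w : List ↥B | w ≠ [] ∧ w.filterMap g = []} ×ˢ
          {w : List ↥B | w ≠ [] ∧ w.filterMap g = []}) := by
    ext ⟨u, v⟩
    simp only [SWP, Set.mem_setOf_eq, Set.mem_union, Set.mem_prod]
    constructor
    · rintro ⟨hu, hv, he⟩
      rw [key u hu, key v hv] at he
      have he' := Option.some_injective _ he
      cases h1 : evalWord (Subtype.val : ↥A → S) (u.filterMap g) with
      | none =>
        cases h2 : evalWord (Subtype.val : ↥A → S) (v.filterMap g) with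
        | none => exact Or.inr ⟨⟨hu, evalWord_eq_none.mp h1⟩, hv, evalWord_eq_none.mp h2⟩
        | some s => rw [h1, h2] at he'; simp at he'
      | some s =>
        cases h2 : evalWord (Subtype.val : ↥A → S) (v.filterMap g) with
        | none => rw [h1, h2] at he'; simp at he'
        | some s' =>
          rw [h1, h2] at he'
          simp only [Option.elim] at he'
          obtain rfl : s = s' := WithOne.coe_inj.mp he'
          refine Or.inl ⟨?_, ?_, rfl⟩
          · intro h; rw [h] at h1; simp [evalWord] at h1
          · intro h; rw [h] at h2; simp [evalWord] at h2
    · rintro (⟨h1, h2, h3⟩ | ⟨⟨hu, hu0⟩, hv, hv0⟩)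
      · have hu : u ≠ [] := by rintro rfl; exact h1 rfl
        have hv : v ≠ [] := by rintro rfl; exact h2 rfl
        refine ⟨hu, hv, ?_⟩
        rw [key u hu, key v hv, h3]
      · refine ⟨hu, hv, ?_⟩
        rw [key u hu, key v hv, hu0, hv0]
  rw [hswp]
  exact isRationalRel_union (isRationalRel_filterMap hA)
    (isRationalRel_prod (lang_nilFilter_regular g) (lang_nilFilter_regular g))

end WPGlueOne
section WPGlueZero

variable {S : Type*} [Semigroup S]

theorem swp_zero_forward {A : Set S} (hA : IsRationalRel (SWP A)) :
    IsRationalRel (SWP ((fun s : S => (s : WithZero S)) '' A ∪ {0})) := by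
  classical
  set B : Set (WithZero S) := (fun s : S => (s : WithZero S)) '' A ∪ {0} with hBdef
  have hmem : ∀ x : ↥B, x.val = 0 ∨ ∃ a : ↥A, x.val = ((a : S) : WithZero S) := by
    rintro ⟨x, hx⟩
    rcases hx with ⟨a, ha, rfl⟩ | hx
    · exact Or.inr ⟨⟨a, ha⟩, rfl⟩
    · exact Or.inl hx
  obtain ⟨g, hg_none, hg_some⟩ :
      ∃ g : ↥B → Option ↥A,
        (∀ x : ↥B, g x = none → x.val = 0) ∧
        (∀ (x : ↥B) (a : ↥A), g x = some a → x.val = ((a : S) : WithZero S)) := by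
    refine ⟨fun x => if h : ∃ a : ↥A, x.val = ((a : S) : WithZero S) then some h.choose
      else none, ?_, ?_⟩
    · intro x hx
      rcases hmem x with h1 | h2
      · exact h1
      · simp only [dif_pos h2] at hx; cases hx
    · intro x a hx
      by_cases h : ∃ a : ↥A, x.val = ((a : S) : WithZero S)
      · simp only [dif_pos h] at hx
        obtain rfl := Option.some_injective _ hx
        exact h.choose_spec
      · simp only [dif_neg h] at hx; cases hx
  have hBim : ∀ a : ↥A, ((a : S) : WithZero S) ∈ B := by
    intro a
    exact Set.mem_union_left _ (Set.mem_image_of_mem _ a.2)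
  set f : ↥A → ↥B := fun a => ⟨((a : S) : WithZero S), hBim a⟩ with hfdef
  have hfg_val : ∀ a : ↥A, (f a).val = ((a : S) : WithZero S) := fun a => rfl
  have hgf : ∀ a : ↥A, g (f a) = some a := by
    intro a
    cases hx : g (f a) with
    | none =>
      have := hg_none _ hx
      rw [hfg_val] at this
      exact absurd this (WithZero.coe_ne_zero)
    | some b =>
      have h1 := hg_some _ b hx
      rw [hfg_val] at h1
      have hab : (a : S) = (b : S) := WithZero.coe_inj.mp h1
      rw [(Subtype.ext hab : a = b)]
  have keyZ : ∀ w : List ↥B, (∃ x ∈ w, x.val = 0) → evalWord Subtype.val w = some 0 := by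
    intro w
    induction w with
    | nil => rintro ⟨x, hx, -⟩; simp at hx
    | cons x l ih =>
      rintro ⟨y, hy, hy0⟩
      rw [evalWord_cons]
      rcases List.mem_cons.mp hy with rfl | hy'
      · cases evalWord (Subtype.val : ↥B → WithZero S) l <;> simp [hy0, zero_mul]
      · rw [ih ⟨y, hy', hy0⟩]; simp [mul_zero]
  have keyC : ∀ w : List ↥B, (∀ x ∈ w, x.val ≠ 0) →
      evalWord Subtype.val w = Option.map (fun s : S => ((s : WithZero S)))
        (evalWord (Subtype.val : ↥A → S) (w.filterMap g)) := by
    intro w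
    induction w with
    | nil => intro _; rfl
    | cons x l ih =>
      intro hw
      rw [evalWord_cons, ih (fun y hy => hw y (List.mem_cons_of_mem _ hy))]
      rcases hx : g x with _ | a
      · exact absurd (hg_none x hx) (hw x (List.mem_cons_self))
      · have h1 := hg_some x a hx
        rw [List.filterMap_cons_some hx, evalWord_cons]
        cases hev : evalWord (Subtype.val : ↥A → S) (l.filterMap g) <;>
          simp [hev, h1, ← WithZero.coe_mul]
  have unstrip : ∀ w : List ↥B, (∀ x ∈ w, x.val ≠ 0) → (w.filterMap g).map f = w := by
    intro w
    induction w with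
    | nil => intro _; rfl
    | cons x l ih =>
      intro hw
      rcases hx : g x with _ | a
      · exact absurd (hg_none x hx) (hw x (List.mem_cons_self))
      · rw [List.filterMap_cons_some hx, List.map_cons,
          ih (fun y hy => hw y (List.mem_cons_of_mem _ hy))]
        have hfa : f a = x := Subtype.ext (by rw [hfg_val]; exact (hg_some x a hx).symm)
        rw [hfa]
  have strip_map : ∀ u : List ↥A, (u.map f).filterMap g = u := by
    intro u
    induction u with
    | nil => rfl
    | cons a u ih => rw [List.map_cons, List.filterMap_cons_some (hgf a), ih]
  have hno0 : ∀ (u : List ↥A) (x : ↥B), x ∈ u.map f → x.val ≠ 0 := by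
    intro u x hx
    obtain ⟨a, -, rfl⟩ := List.mem_map.mp hx
    rw [hfg_val]
    exact WithZero.coe_ne_zero
  have hstrip_ne : ∀ w : List ↥B, w ≠ [] → (∀ x ∈ w, x.val ≠ 0) → w.filterMap g ≠ [] := by
    intro w hw hw0
    cases w with
    | nil => exact absurd rfl hw
    | cons x l =>
      rcases hx : g x with _ | a
      · exact absurd (hg_none x hx) (hw0 x (List.mem_cons_self))
      · rw [List.filterMap_cons_some hx]; simp
  have hswp : SWP B =
      ({w : List ↥B | ∃ x ∈ w, x.val = 0} ×ˢ {w : List ↥B | ∃ x ∈ w, x.val = 0}) ∪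
        {p : List ↥B × List ↥B | ∃ q ∈ SWP A, p.1 = q.1.map f ∧ p.2 = q.2.map f} := by
    ext ⟨u, v⟩
    simp only [SWP, Set.mem_setOf_eq, Set.mem_union, Set.mem_prod]
    constructor
    · rintro ⟨hu, hv, he⟩
      by_cases hu0 : ∃ x ∈ u, x.val = 0
      · by_cases hv0 : ∃ x ∈ v, x.val = 0
        · exact Or.inl ⟨hu0, hv0⟩
        · push_neg at hv0
          rw [keyZ u hu0, keyC v hv0] at he
          exfalso
          cases hev : evalWord (Subtype.val : ↥A → S) (v.filterMap g) <;>
            rw [hev] at he <;> simp at he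
      · push_neg at hu0
        by_cases hv0 : ∃ x ∈ v, x.val = 0
        · rw [keyZ v hv0, keyC u hu0] at he
          exfalso
          cases hev : evalWord (Subtype.val : ↥A → S) (u.filterMap g) <;>
            rw [hev] at he <;> simp at he
        · push_neg at hv0
          rw [keyC u hu0, keyC v hv0] at he
          right
          refine ⟨(u.filterMap g, v.filterMap g),
            ⟨hstrip_ne u hu hu0, hstrip_ne v hv hv0, ?_⟩,
            (unstrip u hu0).symm, (unstrip v hv0).symm⟩
          have hinj : Function.Injective (Option.map (fun s : S => (s : WithZero S))) :=
            Option.map_injective (fun a b h => WithZero.coe_inj.mp h)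
          exact hinj he
    · rintro (⟨hu0, hv0⟩ | ⟨⟨u₀, v₀⟩, ⟨h1, h2, h3⟩, rfl, rfl⟩)
      · exact ⟨List.ne_nil_of_mem hu0.choose_spec.1, List.ne_nil_of_mem hv0.choose_spec.1,
          by rw [keyZ u hu0, keyZ v hv0]⟩
      · refine ⟨by simpa using h1, by simpa using h2, ?_⟩
        rw [keyC _ (hno0 u₀), keyC _ (hno0 v₀), strip_map, strip_map, h3]
  rw [hswp]
  exact isRationalRel_union
    (isRationalRel_prod (lang_existsP_regular _) (lang_existsP_regular _))
    (isRationalRel_map hA)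

end WPGlueZero
section WPBack

variable {S : Type*} [Semigroup S]

theorem swp_one_backward {B : Set (WithOne S)} (hB : IsRationalRel (SWP B)) :
    IsRationalRel (SWP {s : S | (s : WithOne S) ∈ B}) := by
  set A : Set S := {s : S | (s : WithOne S) ∈ B} with hAdef
  set f : ↥A → ↥B := fun a => ⟨((a : S) : WithOne S), a.2⟩ with hfdef
  have hfm : ∀ (u : List ↥A), u.filterMap (fun a => some (f a)) = u.map f := by
    intro u
    induction u with
    | nil => rfl
    | cons a u ih => simp [List.filterMap_cons, ih]
  have hval : ∀ w : List ↥A, evalWord Subtype.val (w.map f) =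
      Option.map (fun s : S => (s : WithOne S)) (evalWord Subtype.val w) := by
    intro w
    rw [evalWord_map_list]
    exact evalWord_hom (WithOne.coeMulHom : S →ₙ* WithOne S) (Subtype.val : ↥A → S) w
  have hone : SWP A = {p : List ↥A × List ↥A |
      (p.1.filterMap (fun a => some (f a)), p.2.filterMap (fun a => some (f a))) ∈ SWP B} := by
    ext ⟨u, v⟩
    simp only [SWP, Set.mem_setOf_eq, hfm]
    constructor
    · rintro ⟨h1, h2, h3⟩
      exact ⟨by simpa using h1, by simpa using h2, by rw [hval, hval, h3]⟩
    · rintro ⟨h1, h2, h3⟩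
      refine ⟨by simpa using h1, by simpa using h2, ?_⟩
      rw [hval, hval] at h3
      exact Option.map_injective (fun a b h => WithOne.coe_inj.mp h) h3
  rw [hone]
  exact isRationalRel_filterMap hB

theorem swp_zero_backward {B : Set (WithZero S)} (hB : IsRationalRel (SWP B)) :
    IsRationalRel (SWP {s : S | (s : WithZero S) ∈ B}) := by
  set A : Set S := {s : S | (s : WithZero S) ∈ B} with hAdef
  set f : ↥A → ↥B := fun a => ⟨((a : S) : WithZero S), a.2⟩ with hfdef
  have hfm : ∀ (u : List ↥A), u.filterMap (fun a => some (f a)) = u.map f := by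
    intro u
    induction u with
    | nil => rfl
    | cons a u ih => simp [List.filterMap_cons, ih]
  have hval : ∀ w : List ↥A, evalWord Subtype.val (w.map f) =
      Option.map (fun s : S => (s : WithZero S)) (evalWord Subtype.val w) := by
    intro w
    rw [evalWord_map_list]
    exact evalWord_hom (⟨fun s : S => (s : WithZero S), fun a b => WithZero.coe_mul a b⟩ : S →ₙ* WithZero S) (Subtype.val : ↥A → S) w
  have hone : SWP A = {p : List ↥A × List ↥A |
      (p.1.filterMap (fun a => some (f a)), p.2.filterMap (fun a => some (f a))) ∈ SWP B} := by
    ext ⟨u, v⟩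
    simp only [SWP, Set.mem_setOf_eq, hfm]
    constructor
    · rintro ⟨h1, h2, h3⟩
      exact ⟨by simpa using h1, by simpa using h2, by rw [hval, hval, h3]⟩
    · rintro ⟨h1, h2, h3⟩
      refine ⟨by simpa using h1, by simpa using h2, ?_⟩
      rw [hval, hval] at h3
      exact Option.map_injective (fun a b h => WithZero.coe_inj.mp h) h3
  rw [hone]
  exact isRationalRel_filterMap hB

theorem gen_one {A : Set S} (hA : Subsemigroup.closure A = ⊤) :
    Subsemigroup.closure ((fun s : S => (s : WithOne S)) '' A ∪ {1}) = ⊤ := by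
  rw [eq_top_iff]
  rintro x -
  by_cases hx1 : x = 1
  · subst hx1
    exact Subsemigroup.subset_closure (Set.mem_union_right _ rfl)
  · obtain ⟨s, rfl⟩ := WithOne.ne_one_iff_exists.mp hx1
    have hs : s ∈ Subsemigroup.closure A := by rw [hA]; trivial
    refine Subsemigroup.closure_induction
      (p := fun (t : S) (_ : t ∈ Subsemigroup.closure A) => ((t : WithOne S) ∈
        Subsemigroup.closure ((fun s : S => (s : WithOne S)) '' A ∪ {1}))) ?_ ?_ hs
    · intro t ht
      exact Subsemigroup.subset_closure (Set.mem_union_left _ (Set.mem_image_of_mem _ ht))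
    · intro t r _ _ pt pr
      rw [WithOne.coe_mul]
      exact mul_mem pt pr

theorem gen_zero {A : Set S} (hA : Subsemigroup.closure A = ⊤) :
    Subsemigroup.closure ((fun s : S => (s : WithZero S)) '' A ∪ {0}) = ⊤ := by
  rw [eq_top_iff]
  rintro x -
  by_cases hx1 : x = 0
  · subst hx1
    exact Subsemigroup.subset_closure (Set.mem_union_right _ rfl)
  · obtain ⟨s, rfl⟩ := WithZero.ne_zero_iff_exists.mp hx1
    have hs : s ∈ Subsemigroup.closure A := by rw [hA]; trivial
    refine Subsemigroup.closure_induction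
      (p := fun (t : S) (_ : t ∈ Subsemigroup.closure A) => ((t : WithZero S) ∈
        Subsemigroup.closure ((fun s : S => (s : WithZero S)) '' A ∪ {0}))) ?_ ?_ hs
    · intro t ht
      exact Subsemigroup.subset_closure (Set.mem_union_left _ (Set.mem_image_of_mem _ ht))
    · intro t r _ _ pt pr
      rw [WithZero.coe_mul]
      exact mul_mem pt pr

theorem gen_one_back {B : Set (WithOne S)} (hB : Subsemigroup.closure B = ⊤) :
    Subsemigroup.closure {s : S | (s : WithOne S) ∈ B} = ⊤ := by
  rw [eq_top_iff]
  rintro s -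
  have hs : (s : WithOne S) ∈ Subsemigroup.closure B := by rw [hB]; trivial
  have key : (s : WithOne S) = 1 ∨
      ∃ t ∈ Subsemigroup.closure {s : S | (s : WithOne S) ∈ B},
        (s : WithOne S) = (t : WithOne S) := by
    refine Subsemigroup.closure_induction
      (p := fun (x : WithOne S) (_ : x ∈ Subsemigroup.closure B) => x = 1 ∨
        ∃ t ∈ Subsemigroup.closure {s : S | (s : WithOne S) ∈ B},
        x = (t : WithOne S)) ?_ ?_ hs
    · intro x hx
      by_cases hx1 : x = 1
      · exact Or.inl hx1
      · obtain ⟨a, rfl⟩ := WithOne.ne_one_iff_exists.mp hx1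
        exact Or.inr ⟨a, Subsemigroup.subset_closure hx, rfl⟩
    · rintro x y _ _ (rfl | ⟨t, ht, rfl⟩) (rfl | ⟨r, hr, rfl⟩)
      · exact Or.inl (one_mul 1)
      · exact Or.inr ⟨r, hr, one_mul _⟩
      · exact Or.inr ⟨t, ht, mul_one _⟩
      · exact Or.inr ⟨t * r, mul_mem ht hr, (WithOne.coe_mul t r).symm⟩
  rcases key with h | ⟨t, ht, h⟩
  · exact absurd h WithOne.coe_ne_one
  · obtain rfl : s = t := WithOne.coe_inj.mp h
    exact ht

theorem gen_zero_back {B : Set (WithZero S)} (hB : Subsemigroup.closure B = ⊤) :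
    Subsemigroup.closure {s : S | (s : WithZero S) ∈ B} = ⊤ := by
  rw [eq_top_iff]
  rintro s -
  have hs : (s : WithZero S) ∈ Subsemigroup.closure B := by rw [hB]; trivial
  have key : (s : WithZero S) = 0 ∨
      ∃ t ∈ Subsemigroup.closure {s : S | (s : WithZero S) ∈ B},
        (s : WithZero S) = (t : WithZero S) := by
    refine Subsemigroup.closure_induction
      (p := fun (x : WithZero S) (_ : x ∈ Subsemigroup.closure B) => x = 0 ∨
        ∃ t ∈ Subsemigroup.closure {s : S | (s : WithZero S) ∈ B},
        x = (t : WithZero S)) ?_ ?_ hs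
    · intro x hx
      by_cases hx1 : x = 0
      · exact Or.inl hx1
      · obtain ⟨a, rfl⟩ := WithZero.ne_zero_iff_exists.mp hx1
        exact Or.inr ⟨a, Subsemigroup.subset_closure hx, rfl⟩
    · rintro x y _ _ (rfl | ⟨t, ht, rfl⟩) (rfl | ⟨r, hr, rfl⟩)
      · exact Or.inl (zero_mul 0)
      · exact Or.inl (zero_mul _)
      · exact Or.inl (mul_zero _)
      · exact Or.inr ⟨t * r, mul_mem ht hr, (WithZero.coe_mul t r).symm⟩
  rcases key with h | ⟨t, ht, h⟩
  · exact absurd h WithZero.coe_ne_zero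
  · obtain rfl : s = t := WithZero.coe_inj.mp h
    exact ht

end WPBack

/-- A finitely generated semigroup has rational word problem iff the semigroup
with an identity adjoined does, and iff the semigroup with a zero adjoined
does. -/
theorem stmt_16 {S : Type*} [Semigroup S]
    (hfg : ∃ A : Set S, A.Finite ∧ Subsemigroup.closure A = ⊤) :
    (HasRationalWP S ↔ HasRationalWP (WithOne S)) ∧
    (HasRationalWP S ↔ HasRationalWP (WithZero S)) := by
  refine ⟨⟨?_, ?_⟩, ?_, ?_⟩
  · rintro ⟨A, hfin, hgen, hrat⟩
    exact ⟨_, (hfin.image _).union (Set.finite_singleton _), gen_one hgen,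
      swp_one_forward hrat⟩
  · rintro ⟨B, hfin, hgen, hrat⟩
    refine ⟨{s : S | (s : WithOne S) ∈ B}, ?_, gen_one_back hgen, swp_one_backward hrat⟩
    exact hfin.preimage (fun a _ b _ h => WithOne.coe_inj.mp h)
  · rintro ⟨A, hfin, hgen, hrat⟩
    exact ⟨_, (hfin.image _).union (Set.finite_singleton _), gen_zero hgen,
      swp_zero_forward hrat⟩
  · rintro ⟨B, hfin, hgen, hrat⟩
    refine ⟨{s : S | (s : WithZero S) ∈ B}, ?_, gen_zero_back hgen, swp_zero_backward hrat⟩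
    exact hfin.preimage (fun a _ b _ h => WithZero.coe_inj.mp h)
end

section
/- Let T = S ∪ I be a finitely generated semigroup where I is a finite ideal of T and S is an infinite subsemigroup of T with S ∩ I = ∅. Then S has rational word problem if and only if T has rational word problem. -/
namespace AsyncFSA

variable {A B A' B' : Type*}

lemma toList_map {α β : Type*} (f : α → β) (a : Option α) :
    (a.map f).toList = a.toList.map f := by cases a <;> rfl

lemma Reaches.append_s17 {M : AsyncFSA A B} {p q r : M.Q} {u u' : List A} {v v' : List B}
    (h1 : M.Reaches p u v q) (h2 : M.Reaches q u' v' r) :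
    M.Reaches p (u ++ u') (v ++ v') r := by
  induction h1 with
  | refl => simpa using h2
  | step ht _ ih =>
    rw [List.append_assoc, List.append_assoc]
    exact .step ht (ih h2)

/-- comap: pull an automaton back along letter maps. -/
def comap (M : AsyncFSA A' B') (f : A → A') (g : B → B') : AsyncFSA A B where
  Q := M.Q
  fin := M.fin
  init := M.init
  accept := M.accept
  trans p a b q := M.trans p (a.map f) (b.map g) q

private lemma exists_of_toList_append {α β : Type*} {f : α → β} {a : Option β}
    {u₀ : List β} {u : List α} (h : a.toList ++ u₀ = u.map f) :
    ∃ (a₀ : Option α) (u₁ : List α), a₀.map f = a ∧ u₁.map f = u₀ ∧ u = a₀.toList ++ u₁ := by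
  cases a with
  | none => exact ⟨none, u, rfl, h.symm, rfl⟩
  | some x =>
    cases u with
    | nil => simp at h
    | cons w u₁ =>
      simp only [Option.toList, List.cons_append, List.nil_append, List.map_cons,
        List.cons.injEq] at h
      exact ⟨some w, u₁, by simp [h.1], h.2.symm, rfl⟩

lemma comap_reaches {M : AsyncFSA A' B'} {f : A → A'} {g : B → B'} {p q : M.Q}
    {u : List A} {v : List B} :
    (M.comap f g).Reaches p u v q ↔ M.Reaches p (u.map f) (v.map g) q := by
  constructor
  · intro h
    have key0 : ∀ {p q : (M.comap f g).Q} {u : List A} {v : List B},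
        (M.comap f g).Reaches p u v q → M.Reaches p (u.map f) (v.map g) q := by
      intro p q u v h
      induction h with
      | refl => exact .refl _
      | step ht _ ih =>
        rw [List.map_append, List.map_append, ← toList_map, ← toList_map]
        exact .step ht ih
    exact key0 h
  · intro h
    have key : ∀ {p q : M.Q} {U V}, M.Reaches p U V q → ∀ u v, U = u.map f → V = v.map g →
        (M.comap f g).Reaches p u v q := by
      intro p q U V h
      induction h with
      | refl =>
        intro u v hu hv
        obtain rfl : u = [] := by simpa using hu.symm
        obtain rfl : v = [] := by simpa using hv.symm
        exact .refl _
      | step ht _ ih =>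
        intro u v hu hv
        obtain ⟨a₀, u₁, ha, hu₁, rfl⟩ := exists_of_toList_append hu
        obtain ⟨b₀, v₁, hb, hv₁, rfl⟩ := exists_of_toList_append hv
        refine Reaches.step ?_ (ih _ _ hu₁.symm hv₁.symm)
        show M.trans _ (a₀.map f) (b₀.map g) _
        rw [ha, hb]; exact ht
    exact key h u v rfl rfl

lemma comap_accepts {M : AsyncFSA A' B'} {f : A → A'} {g : B → B'} {u : List A} {v : List B} :
    (M.comap f g).Accepts u v ↔ M.Accepts (u.map f) (v.map g) :=
  exists_congr fun _ => and_congr_right fun _ => comap_reaches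

/-- amap: push an automaton forward along letter maps. -/
def amap (M : AsyncFSA A B) (f : A → A') (g : B → B') : AsyncFSA A' B' where
  Q := M.Q
  fin := M.fin
  init := M.init
  accept := M.accept
  trans p a b q := ∃ a₀ b₀, a = Option.map f a₀ ∧ b = Option.map g b₀ ∧ M.trans p a₀ b₀ q

lemma amap_reaches {M : AsyncFSA A B} {f : A → A'} {g : B → B'} {p q : M.Q}
    {u : List A'} {v : List B'} :
    (M.amap f g).Reaches p u v q ↔
      ∃ u₀ v₀, u = u₀.map f ∧ v = v₀.map g ∧ M.Reaches p u₀ v₀ q := by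
  constructor
  · intro h
    have key0 : ∀ {p q : (M.amap f g).Q} {u : List A'} {v : List B'},
        (M.amap f g).Reaches p u v q →
        ∃ u₀ v₀, u = u₀.map f ∧ v = v₀.map g ∧ M.Reaches p u₀ v₀ q := by
      intro p q u v h
      induction h with
      | refl => exact ⟨[], [], rfl, rfl, .refl _⟩
      | step ht _ ih =>
        obtain ⟨a₀, b₀, rfl, rfl, ht'⟩ := ht
        obtain ⟨u₀, v₀, rfl, rfl, hr⟩ := ih
        exact ⟨a₀.toList ++ u₀, b₀.toList ++ v₀, by rw [List.map_append, toList_map],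
          by rw [List.map_append, toList_map], .step ht' hr⟩
    exact key0 h
  · rintro ⟨u₀, v₀, rfl, rfl, h⟩
    induction h with
    | refl => exact .refl _
    | step ht _ ih =>
      rw [List.map_append, List.map_append, ← toList_map, ← toList_map]
      exact .step ⟨_, _, rfl, rfl, ht⟩ ih

lemma amap_accepts {M : AsyncFSA A B} {f : A → A'} {g : B → B'} {u : List A'} {v : List B'} :
    (M.amap f g).Accepts u v ↔
      ∃ u₀ v₀, u = u₀.map f ∧ v = v₀.map g ∧ M.Accepts u₀ v₀ := by
  constructor
  · rintro ⟨q, hq, hr⟩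
    obtain ⟨u₀, v₀, rfl, rfl, hr2⟩ := amap_reaches.mp hr
    exact ⟨u₀, v₀, rfl, rfl, q, hq, show M.Reaches M.init u₀ v₀ q from hr2⟩
  · rintro ⟨u₀, v₀, rfl, rfl, q, hq, hr⟩
    exact ⟨q, hq, amap_reaches.mpr ⟨u₀, v₀, rfl, rfl, show M.Reaches (M.amap f g).init u₀ v₀ q from hr⟩⟩

/-- Union automaton. -/
def union (M₁ M₂ : AsyncFSA A B) : AsyncFSA A B where
  Q := Unit ⊕ (M₁.Q ⊕ M₂.Q)
  fin := by haveI := M₁.fin; haveI := M₂.fin; exact inferInstance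
  init := Sum.inl ()
  accept := {q | (∃ q₁ ∈ M₁.accept, q = Sum.inr (.inl q₁)) ∨ (∃ q₂ ∈ M₂.accept, q = Sum.inr (.inr q₂))}
  trans p a b q :=
    (p = Sum.inl () ∧ a = none ∧ b = none ∧ (q = Sum.inr (.inl M₁.init) ∨ q = Sum.inr (.inr M₂.init)))
    ∨ (∃ p₁ q₁, p = Sum.inr (.inl p₁) ∧ q = Sum.inr (.inl q₁) ∧ M₁.trans p₁ a b q₁)
    ∨ (∃ p₂ q₂, p = Sum.inr (.inr p₂) ∧ q = Sum.inr (.inr q₂) ∧ M₂.trans p₂ a b q₂)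

lemma union_reaches_inl {M₁ M₂ : AsyncFSA A B} {p q : M₁.Q} {u v}
    (h : M₁.Reaches p u v q) :
    (M₁.union M₂).Reaches (Sum.inr (.inl p)) u v (Sum.inr (.inl q)) := by
  induction h with
  | refl => exact .refl _
  | step ht _ ih => exact .step (Or.inr (Or.inl ⟨_, _, rfl, rfl, ht⟩)) ih

lemma union_reaches_inr {M₁ M₂ : AsyncFSA A B} {p q : M₂.Q} {u v}
    (h : M₂.Reaches p u v q) :
    (M₁.union M₂).Reaches (Sum.inr (.inr p)) u v (Sum.inr (.inr q)) := by
  induction h with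
  | refl => exact .refl _
  | step ht _ ih => exact .step (Or.inr (Or.inr ⟨_, _, rfl, rfl, ht⟩)) ih

lemma union_reaches_inl' {M₁ M₂ : AsyncFSA A B} {s r u v}
    (h : (M₁.union M₂).Reaches s u v r) :
    ∀ p, s = Sum.inr (Sum.inl p) → ∃ q, r = Sum.inr (Sum.inl q) ∧ M₁.Reaches p u v q := by
  induction h with
  | refl => exact fun p hp => ⟨p, hp, .refl _⟩
  | step ht _ ih =>
    rintro p rfl
    rcases ht with ⟨h0, -⟩ | ⟨p₁, q₁, hp₁, rfl, ht₁⟩ | ⟨p₂, q₂, hp₂, -, -⟩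
    · simp at h0
    · obtain rfl : p₁ = p := by simpa using hp₁.symm
      obtain ⟨q, rfl, hq⟩ := ih _ rfl
      exact ⟨q, rfl, .step ht₁ hq⟩
    · simp at hp₂

lemma union_reaches_inr' {M₁ M₂ : AsyncFSA A B} {s r u v}
    (h : (M₁.union M₂).Reaches s u v r) :
    ∀ p, s = Sum.inr (Sum.inr p) → ∃ q, r = Sum.inr (Sum.inr q) ∧ M₂.Reaches p u v q := by
  induction h with
  | refl => exact fun p hp => ⟨p, hp, .refl _⟩
  | step ht _ ih =>
    rintro p rfl
    rcases ht with ⟨h0, -⟩ | ⟨p₁, q₁, hp₁, -, -⟩ | ⟨p₂, q₂, hp₂, rfl, ht₂⟩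
    · simp at h0
    · simp at hp₁
    · obtain rfl : p₂ = p := by simpa using hp₂.symm
      obtain ⟨q, rfl, hq⟩ := ih _ rfl
      exact ⟨q, rfl, .step ht₂ hq⟩

lemma union_accepts {M₁ M₂ : AsyncFSA A B} {u v} :
    (M₁.union M₂).Accepts u v ↔ M₁.Accepts u v ∨ M₂.Accepts u v := by
  constructor
  · rintro ⟨r, hracc, hr⟩
    cases hr with
    | refl =>
      rcases hracc with ⟨q₁, -, h⟩ | ⟨q₂, -, h⟩ <;> exact (Sum.inl_ne_inr h).elim
    | step ht hr' =>
      rcases ht with ⟨-, rfl, rfl, hq | hq⟩ | ⟨p₁, q₁, hp, -, -⟩ | ⟨p₂, q₂, hp, -, -⟩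
      · subst hq
        obtain ⟨q, rfl, h⟩ := union_reaches_inl' hr' _ rfl
        rcases hracc with ⟨q₁, hacc, hq⟩ | ⟨q₂, -, hq⟩
        · obtain rfl : q₁ = q := by simpa using hq.symm
          exact Or.inl ⟨_, hacc, h⟩
        · simp at hq
      · subst hq
        obtain ⟨q, rfl, h⟩ := union_reaches_inr' hr' _ rfl
        rcases hracc with ⟨q₁, -, hq⟩ | ⟨q₂, hacc, hq⟩
        · simp at hq
        · obtain rfl : q₂ = q := by simpa using hq.symm
          exact Or.inr ⟨_, hacc, h⟩
      · exact (Sum.inl_ne_inr hp).elim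
      · exact (Sum.inl_ne_inr hp).elim
  · rintro (⟨q, hacc, h⟩ | ⟨q, hacc, h⟩)
    · refine ⟨Sum.inr (.inl q), Or.inl ⟨q, hacc, rfl⟩, ?_⟩
      have := Reaches.step (M := M₁.union M₂) (a := none) (b := none)
        (Or.inl ⟨rfl, rfl, rfl, Or.inl rfl⟩) (union_reaches_inl h)
      exact (show (M₁.union M₂).Reaches (Sum.inl ()) u v _ by simpa using this)
    · refine ⟨Sum.inr (.inr q), Or.inr ⟨q, hacc, rfl⟩, ?_⟩
      have := Reaches.step (M := M₁.union M₂) (a := none) (b := none)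
        (Or.inl ⟨rfl, rfl, rfl, Or.inr rfl⟩) (union_reaches_inr h)
      exact (show (M₁.union M₂).Reaches (Sum.inl ()) u v _ by simpa using this)

end AsyncFSA

theorem IsRationalRel.union {A B : Type*} {R₁ R₂ : Set (List A × List B)}
    (h₁ : IsRationalRel R₁) (h₂ : IsRationalRel R₂) : IsRationalRel (R₁ ∪ R₂) := by
  obtain ⟨M₁, hM₁⟩ := h₁; obtain ⟨M₂, hM₂⟩ := h₂
  exact ⟨M₁.union M₂, fun p => by
    rw [Set.mem_union, hM₁, hM₂, AsyncFSA.union_accepts]⟩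
section ProdAuto

variable {α β : Type*}

def optStep {Q : Type*} {γ : Type*} (δ : Q → γ → Q) (q : Q) : Option γ → Q
  | none => q
  | some a => δ q a

lemma foldl_toList_append {Q γ : Type*} (δ : Q → γ → Q) (p : Q) (a : Option γ) (u : List γ) :
    (a.toList ++ u).foldl δ p = u.foldl δ (optStep δ p a) := by cases a <;> rfl

/-- Any relation defined by running two (transported) DFAs on the two tapes and
checking a predicate on the resulting states is rational. -/
theorem isRationalRel_foldl {Q₁ Q₂ : Type*} [Finite Q₁] [Finite Q₂]
    (δ₁ : Q₁ → α → Q₁) (δ₂ : Q₂ → β → Q₂) (i₁ : Q₁) (i₂ : Q₂) (F : Q₁ → Q₂ → Prop) :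
    IsRationalRel {p : List α × List β | F (p.1.foldl δ₁ i₁) (p.2.foldl δ₂ i₂)} := by
  obtain ⟨n₁, ⟨e₁⟩⟩ := Finite.exists_equiv_fin Q₁
  obtain ⟨n₂, ⟨e₂⟩⟩ := Finite.exists_equiv_fin Q₂
  set d₁ : Fin n₁ → α → Fin n₁ := fun q a => e₁ (δ₁ (e₁.symm q) a) with hd₁
  set d₂ : Fin n₂ → β → Fin n₂ := fun q a => e₂ (δ₂ (e₂.symm q) a) with hd₂
  have hfold₁ : ∀ (u : List α) (q : Q₁), u.foldl d₁ (e₁ q) = e₁ (u.foldl δ₁ q) := fun u q =>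
    List.foldl_hom e₁ (fun x y => by simp [hd₁])
  have hfold₂ : ∀ (v : List β) (q : Q₂), v.foldl d₂ (e₂ q) = e₂ (v.foldl δ₂ q) := fun v q =>
    List.foldl_hom e₂ (fun x y => by simp [hd₂])
  refine ⟨⟨Fin n₁ × Fin n₂, (e₁ i₁, e₂ i₂), {q | F (e₁.symm q.1) (e₂.symm q.2)},
    fun p a b q => q.1 = optStep d₁ p.1 a ∧ q.2 = optStep d₂ p.2 b⟩, ?_⟩
  set M : AsyncFSA α β := ⟨Fin n₁ × Fin n₂, (e₁ i₁, e₂ i₂), {q | F (e₁.symm q.1) (e₂.symm q.2)},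
    fun p a b q => q.1 = optStep d₁ p.1 a ∧ q.2 = optStep d₂ p.2 b⟩ with hM
  have fwd : ∀ {pq r : M.Q} {u v}, M.Reaches pq u v r →
      (r : Fin n₁ × Fin n₂).1 = u.foldl d₁ (pq : Fin n₁ × Fin n₂).1 ∧
        (r : Fin n₁ × Fin n₂).2 = v.foldl d₂ (pq : Fin n₁ × Fin n₂).2 := by
    intro pq r u v h
    induction h with
    | refl => exact ⟨rfl, rfl⟩
    | step ht _ ih =>
      rw [foldl_toList_append, foldl_toList_append, ← ht.1, ← ht.2]
      exact ih
  have bwd1 : ∀ (u : List α) (pq : Fin n₁ × Fin n₂), M.Reaches pq u [] (u.foldl d₁ pq.1, pq.2) := by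
    intro u
    induction u with
    | nil => intro pq; simpa using AsyncFSA.Reaches.refl (M := M) pq
    | cons a u ih =>
      intro pq
      have step1 : M.trans pq (some a) none (d₁ pq.1 a, pq.2) := ⟨rfl, rfl⟩
      have := AsyncFSA.Reaches.step step1 (ih (d₁ pq.1 a, pq.2))
      simpa using this
  have bwd2 : ∀ (v : List β) (pq : Fin n₁ × Fin n₂), M.Reaches pq [] v (pq.1, v.foldl d₂ pq.2) := by
    intro v
    induction v with
    | nil => intro pq; simpa using AsyncFSA.Reaches.refl (M := M) pq
    | cons b v ih =>
      intro pq
      have step1 : M.trans pq none (some b) (pq.1, d₂ pq.2 b) := ⟨rfl, rfl⟩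
      have := AsyncFSA.Reaches.step step1 (ih (pq.1, d₂ pq.2 b))
      simpa using this
  have bwd : ∀ (u : List α) (v : List β) (pq : Fin n₁ × Fin n₂),
      M.Reaches pq u v (u.foldl d₁ pq.1, v.foldl d₂ pq.2) := by
    intro u v pq
    have h2 := bwd2 v (u.foldl d₁ pq.1, pq.2)
    have := AsyncFSA.Reaches.append_s17 (bwd1 u pq) h2
    simpa using this
  rintro ⟨u, v⟩
  simp only [Set.mem_setOf_eq]
  constructor
  · intro hF
    refine ⟨(e₁ (u.foldl δ₁ i₁), e₂ (v.foldl δ₂ i₂)), by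
      show F (e₁.symm (e₁ (u.foldl δ₁ i₁))) (e₂.symm (e₂ (v.foldl δ₂ i₂))); simpa using hF, ?_⟩
    have := bwd u v (e₁ i₁, e₂ i₂)
    rwa [show (e₁ i₁, e₂ i₂).1 = e₁ i₁ from rfl, show (e₁ i₁, e₂ i₂).2 = e₂ i₂ from rfl,
      hfold₁, hfold₂] at this
  · rintro ⟨q, hq, hr⟩
    obtain ⟨h1, h2⟩ := fwd hr
    have hq' : F (e₁.symm q.1) (e₂.symm q.2) := hq
    rw [h1, h2, show (M.init).1 = e₁ i₁ from rfl, show (M.init).2 = e₂ i₂ from rfl,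
      hfold₁, hfold₂] at hq'
    simpa using hq'
end ProdAuto


section EvalWord

lemma evalWord_map_eq {α β S₁ S₂ : Type*} [Semigroup S₁] [Semigroup S₂] (φ : S₁ →ₙ* S₂)
    (j : α → β) (g : α → S₁) (h : β → S₂) (hcomm : ∀ a, h (j a) = φ (g a)) :
    ∀ u : List α, evalWord h (u.map j) = (evalWord g u).map φ
  | [] => rfl
  | a :: l => by
    show some _ = some _
    congr 1
    rw [List.foldl_map, hcomm]
    exact List.foldl_hom φ
      (fun x y => by simp only [hcomm, map_mul])

lemma evalWord_eq_none_iff {α S : Type*} [Semigroup S] (f : α → S) (u : List α) :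
    evalWord f u = none ↔ u = [] := by
  cases u with
  | nil => simp [evalWord]
  | cons a l => simp [evalWord]

end EvalWord


/-- For a finitely generated semigroup `T` that is the disjoint union of an
infinite subsemigroup `S'` and a finite ideal `I`, `S'` has rational word
problem iff `T` does. -/
theorem stmt_17 {T : Type*} [Semigroup T]
    (hfg : ∃ A : Set T, A.Finite ∧ Subsemigroup.closure A = ⊤)
    (S' : Subsemigroup T) (I : Set T) (hI : I.Finite)
    (hideal : ∀ t : T, ∀ i ∈ I, t * i ∈ I ∧ i * t ∈ I)
    (hinf : (S' : Set T).Infinite)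
    (hdisj : (S' : Set T) ∩ I = ∅)
    (hunion : (S' : Set T) ∪ I = Set.univ) :
    HasRationalWP ↥S' ↔ HasRationalWP T := by
  classical
  have hSsub : ∀ {t : T}, t ∈ S' → t ∉ I := by
    intro t ht hi
    have h : t ∈ (S' : Set T) ∩ I := ⟨ht, hi⟩
    rw [hdisj] at h
    exact h
  have hcases : ∀ t : T, t ∈ S' ∨ t ∈ I := by
    intro t
    have h : t ∈ (S' : Set T) ∪ I := by rw [hunion]; exact Set.mem_univ t
    exact h
  constructor
  · -- S' has rational WP → T has rational WP
    rintro ⟨B, hBfin, hBcl, M₀, hM₀⟩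
    refine ⟨(Subtype.val '' B) ∪ I, (hBfin.image _).union hI, ?_, ?_⟩
    · rw [eq_top_iff]
      rintro t -
      rcases hcases t with hS | hI'
      · have hmem : (⟨t, hS⟩ : ↥S') ∈ Subsemigroup.closure B := by
          rw [hBcl]; exact Subsemigroup.mem_top _
        have key : ∀ y : ↥S', y ∈ Subsemigroup.closure B →
            (y : T) ∈ Subsemigroup.closure ((Subtype.val '' B) ∪ I) := by
          intro y hy
          induction hy using Subsemigroup.closure_induction with
          | mem a ha => exact Subsemigroup.subset_closure (Or.inl ⟨a, ha, rfl⟩)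
          | mul a b ha hb iha ihb => exact mul_mem iha ihb
        exact key _ hmem
      · exact Subsemigroup.subset_closure (Or.inr hI')
    · set C : Set T := (Subtype.val '' B) ∪ I with hC
      set ι : ↥B → ↥C := fun b => ⟨((b : ↥S') : T), by rw [hC]; exact Or.inl ⟨(b : ↥S'), b.2, rfl⟩⟩
        with hι
      have hev : ∀ u : List ↥B,
          evalWord Subtype.val (u.map ι) = (evalWord Subtype.val u).map (MulMemClass.subtype S') :=
        evalWord_map_eq (MulMemClass.subtype S') ι Subtype.val Subtype.val (fun a => rfl)
      haveI hIfin : Finite ↥I := hI.to_subtype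
      set δv : ((↥I → ↥I) ⊕ ↥I) → ↥C → ((↥I → ↥I) ⊕ ↥I) := fun s a =>
        match s with
        | Sum.inl g => if h : (a : T) ∈ I then Sum.inr (g ⟨(a : T), h⟩)
            else Sum.inl (fun i => g ⟨(a : T) * (i : T), (hideal _ _ i.2).1⟩)
        | Sum.inr x => Sum.inr ⟨(x : T) * (a : T), (hideal _ _ x.2).2⟩
        with hδv
      set stateOf : T → ((↥I → ↥I) ⊕ ↥I) := fun t => if h : t ∈ I then Sum.inr ⟨t, h⟩
        else Sum.inl (fun i => ⟨t * (i : T), (hideal _ _ i.2).1⟩) with hstateOf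
      have hmemC : ∀ a : ↥C, (a : T) ∉ I → (a : T) ∈ S' := by
        intro a ha
        have h2 : (a : T) ∈ Subtype.val '' B ∪ I := a.2
        rcases h2 with hmem | hmem
        · obtain ⟨s, hs, hval⟩ := hmem; exact hval ▸ s.2
        · exact absurd hmem ha
      have hstep : ∀ (t : T) (a : ↥C), δv (stateOf t) a = stateOf (t * (a : T)) := by
        intro t a
        by_cases ht : t ∈ I
        · have h2 : t * (a : T) ∈ I := (hideal (a : T) t ht).2
          simp only [hδv, hstateOf, dif_pos ht, dif_pos h2]
        · by_cases ha : (a : T) ∈ I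
          · have h2 : t * (a : T) ∈ I := (hideal t (a : T) ha).1
            simp only [hδv, hstateOf, dif_neg ht, dif_pos ha, dif_pos h2]
          · have h2 : t * (a : T) ∉ I := hSsub (mul_mem ((hcases t).resolve_right ht) (hmemC a ha))
            simp only [hδv, hstateOf, dif_neg ht, dif_neg ha, dif_neg h2]
            congr 1
            funext i
            exact Subtype.ext (mul_assoc t (a : T) (i : T)).symm
      have hinit : ∀ a : ↥C, δv (Sum.inl id) a = stateOf (a : T) := by
        intro a
        by_cases ha : (a : T) ∈ I
        · simp only [hδv, hstateOf, dif_pos ha, id_eq]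
        · simp only [hδv, hstateOf, dif_neg ha, id_eq]
      have hrun : ∀ (l : List ↥C) (t : T),
          List.foldl δv (stateOf t) l =
            stateOf (List.foldl (fun s x => s * Subtype.val x) t l) := by
        intro l
        induction l with
        | nil => intro t; rfl
        | cons a l ih =>
          intro t
          rw [List.foldl_cons, hstep, List.foldl_cons]
          exact ih _
      have heval : ∀ (w : List ↥C) (t : T), evalWord Subtype.val w = some t →
          List.foldl δv (Sum.inl id) w = stateOf t := by
        intro w t hw
        cases w with
        | nil => simp [evalWord] at hw
        | cons a l =>
          obtain rfl : List.foldl (fun s x => s * Subtype.val x) (Subtype.val a) l = t := by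
            simpa [evalWord] using hw
          rw [List.foldl_cons, hinit, hrun]
      have hinr : ∀ (w : List ↥C) (i : ↥I), List.foldl δv (Sum.inl id) w = Sum.inr i →
          w ≠ [] ∧ evalWord Subtype.val w = some (i : T) := by
        intro w i hw
        cases w with
        | nil =>
          rw [List.foldl_nil] at hw
          exact (Sum.inl_ne_inr hw).elim
        | cons a l =>
          refine ⟨by simp, ?_⟩
          have he : evalWord Subtype.val (a :: l) =
              some (List.foldl (fun s x => s * Subtype.val x) (Subtype.val a) l) := rfl
          rw [heval _ _ he] at hw
          rw [he]
          congr 1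
          by_cases hfI : List.foldl (fun s x => s * Subtype.val x) (Subtype.val a) l ∈ I
          · rw [hstateOf] at hw
            simp only [dif_pos hfI] at hw
            exact congrArg Subtype.val (Sum.inr.inj hw)
          · rw [hstateOf] at hw
            simp only [dif_neg hfI] at hw
            exact (Sum.inl_ne_inr hw).elim
      have hfold : ∀ (l : List ↥C) (x : T),
          (x ∈ I ∨ ∃ a ∈ l, (a : T) ∈ I) →
          List.foldl (fun s c => s * Subtype.val c) x l ∈ I := by
        intro l
        induction l with
        | nil =>
          rintro x (hx | ⟨a, ha, -⟩)
          · exact hx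
          · exact absurd ha List.not_mem_nil
        | cons c l ih =>
          rintro x (hx | ⟨a, ha, haI⟩)
          · exact ih _ (Or.inl (hideal _ _ hx).2)
          · rcases List.mem_cons.mp ha with rfl | ha'
            · exact ih _ (Or.inl (hideal x _ haI).1)
            · exact ih _ (Or.inr ⟨a, ha', haI⟩)
      have hevalI : ∀ (w : List ↥C) (t : T), evalWord Subtype.val w = some t →
          (∃ a ∈ w, (a : T) ∈ I) → t ∈ I := by
        intro w t hw hex
        cases w with
        | nil => simp [evalWord] at hw
        | cons b l =>
          obtain rfl : List.foldl (fun s x => s * Subtype.val x) (Subtype.val b) l = t := by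
            simpa [evalWord] using hw
          apply hfold
          obtain ⟨a, ha, haI⟩ := hex
          rcases List.mem_cons.mp ha with rfl | ha'
          · exact Or.inl haI
          · exact Or.inr ⟨a, ha', haI⟩
      have hpre : ∀ w : List ↥C, (∀ a ∈ w, (a : T) ∉ I) → ∃ w₀ : List ↥B, w = w₀.map ι := by
        intro w
        induction w with
        | nil => exact fun _ => ⟨[], rfl⟩
        | cons a l ih =>
          intro h
          obtain ⟨l₀, rfl⟩ := ih (fun x hx => h x (List.mem_cons_of_mem _ hx))
          have ha : (a : T) ∉ I := h a List.mem_cons_self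
          have h2 : (a : T) ∈ Subtype.val '' B ∪ I := a.2
          rcases h2 with hmem | hmem
          · obtain ⟨s, hsB, hs⟩ := hmem
            refine ⟨⟨s, hsB⟩ :: l₀, ?_⟩
            rw [List.map_cons]
            congr 1
            rw [hι]
            exact Subtype.ext hs.symm
          · exact absurd hmem ha
      set R₁ : Set (List ↥C × List ↥C) := {p | ∃ u₀ v₀ : List ↥B,
          p.1 = u₀.map ι ∧ p.2 = v₀.map ι ∧ (u₀, v₀) ∈ SWP B} with hR₁def
      set R₂ : Set (List ↥C × List ↥C) := {p | ∃ i : ↥I,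
          List.foldl δv (Sum.inl id) p.1 = Sum.inr i ∧
          List.foldl δv (Sum.inl id) p.2 = Sum.inr i} with hR₂def
      have hR₁ : IsRationalRel R₁ := by
        refine ⟨M₀.amap ι ι, fun p => ?_⟩
        rw [AsyncFSA.amap_accepts, hR₁def]
        simp only [Set.mem_setOf_eq]
        constructor
        · rintro ⟨u₀, v₀, h1, h2, h3⟩
          exact ⟨u₀, v₀, h1, h2, (hM₀ (u₀, v₀)).1 h3⟩
        · rintro ⟨u₀, v₀, h1, h2, h3⟩
          exact ⟨u₀, v₀, h1, h2, (hM₀ (u₀, v₀)).2 h3⟩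
      have hR₂ : IsRationalRel R₂ :=
        isRationalRel_foldl δv δv (Sum.inl id) (Sum.inl id)
          (fun s₁ s₂ => ∃ i : ↥I, s₁ = Sum.inr i ∧ s₂ = Sum.inr i)
      have hsplit : SWP C = R₁ ∪ R₂ := by
        ext p
        obtain ⟨u, v⟩ := p
        simp only [SWP, Set.mem_setOf_eq, Set.mem_union, hR₁def, hR₂def]
        constructor
        · rintro ⟨hu, hv, heq⟩
          obtain ⟨t, ht⟩ : ∃ t, evalWord Subtype.val u = some t := by
            cases h : evalWord Subtype.val u with
            | none => exact absurd ((evalWord_eq_none_iff _ _).mp h) hu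
            | some t => exact ⟨t, rfl⟩
          rcases hcases t with htS | htI
          · left
            have hut : ∀ a ∈ u, (a : T) ∉ I := fun a ha haI =>
              hSsub htS (hevalI u t ht ⟨a, ha, haI⟩)
            have hvt : ∀ a ∈ v, (a : T) ∉ I := fun a ha haI =>
              hSsub htS (hevalI v t (heq.symm.trans ht) ⟨a, ha, haI⟩)
            obtain ⟨u₀, rfl⟩ := hpre u hut
            obtain ⟨v₀, rfl⟩ := hpre v hvt
            have h1 : (evalWord Subtype.val u₀).map (MulMemClass.subtype S') = some t := by
              rw [← hev]; exact ht
            have h2 : (evalWord Subtype.val v₀).map (MulMemClass.subtype S') = some t := by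
              rw [← hev]; exact heq.symm.trans ht
            obtain ⟨s, hs, hst⟩ := Option.map_eq_some_iff.mp h1
            obtain ⟨s2, hs2, hst2⟩ := Option.map_eq_some_iff.mp h2
            obtain rfl : s = s2 := Subtype.ext (show (s : T) = s2 from hst.trans hst2.symm)
            refine ⟨u₀, v₀, rfl, rfl, ?_, ?_, hs.trans hs2.symm⟩
            · intro h; rw [h] at hu; exact hu rfl
            · intro h; rw [h] at hv; exact hv rfl
          · right
            have hsI : stateOf t = Sum.inr ⟨t, htI⟩ := by simp only [hstateOf, dif_pos htI]
            exact ⟨⟨t, htI⟩, (heval u t ht).trans hsI, (heval v t (heq.symm.trans ht)).trans hsI⟩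
        · rintro (⟨u₀, v₀, rfl, rfl, h1, h2, h3⟩ | ⟨i, h1, h2⟩)
          · refine ⟨by simpa using h1, by simpa using h2, ?_⟩
            rw [hev, hev, h3]
          · obtain ⟨hu, he1⟩ := hinr _ _ h1
            obtain ⟨hv, he2⟩ := hinr _ _ h2
            exact ⟨hu, hv, he1.trans he2.symm⟩
      rw [hsplit]
      exact hR₁.union hR₂
  · -- T has rational WP → S' has rational WP
    rintro ⟨A, hAfin, hAcl, M, hM⟩
    refine ⟨Subtype.val ⁻¹' A, hAfin.preimage Subtype.val_injective.injOn, ?_, ?_⟩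
    · rw [eq_top_iff]
      rintro x -
      have hx : (x : T) ∈ Subsemigroup.closure A := by rw [hAcl]; exact Subsemigroup.mem_top _
      have key : ∀ t : T, t ∈ Subsemigroup.closure A →
          t ∈ I ∨ ∃ y : ↥S', (y : T) = t ∧
            y ∈ Subsemigroup.closure (Subtype.val ⁻¹' A : Set ↥S') := by
        intro t ht
        induction ht using Subsemigroup.closure_induction with
        | mem a ha =>
          rcases hcases a with hS | hI'
          · exact Or.inr ⟨⟨a, hS⟩, rfl, Subsemigroup.subset_closure ha⟩
          · exact Or.inl hI'
        | mul a b ha hb iha ihb =>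
          rcases iha with haI | ⟨y, rfl, hy⟩
          · exact Or.inl (hideal b a haI).2
          · rcases ihb with hbI | ⟨z, rfl, hz⟩
            · exact Or.inl (hideal _ _ hbI).1
            · exact Or.inr ⟨y * z, rfl, mul_mem hy hz⟩
      rcases key _ hx with hxI | ⟨y, hy, hycl⟩
      · exact absurd hxI (hSsub x.2)
      · have hyx : y = x := Subtype.ext hy
        rwa [hyx] at hycl
    · set j : ↥(Subtype.val ⁻¹' A : Set ↥S') → ↥A := fun a => ⟨((a : ↥S') : T), a.2⟩ with hj
      refine ⟨M.comap j j, fun p => ?_⟩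
      rw [AsyncFSA.comap_accepts, ← hM (p.1.map j, p.2.map j)]
      have hev : ∀ u : List ↥(Subtype.val ⁻¹' A : Set ↥S'),
          evalWord Subtype.val (u.map j) = (evalWord Subtype.val u).map (MulMemClass.subtype S') :=
        evalWord_map_eq (MulMemClass.subtype S') j Subtype.val Subtype.val (fun a => rfl)
      simp only [SWP, Set.mem_setOf_eq]
      constructor
      · rintro ⟨h1, h2, h3⟩
        exact ⟨by simpa using h1, by simpa using h2, by rw [hev, hev, h3]⟩
      · rintro ⟨h1, h2, h3⟩
        refine ⟨by simpa using h1, by simpa using h2, ?_⟩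
        have h3' := h3
        rw [hev, hev] at h3'
        exact Option.map_injective (fun a b hab => Subtype.ext hab) h3'
end
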